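/- arXiv:1108.5422 — 10 statements merged into one kernel-verified Lean document; each statement's English description precedes it below -/
import Mathlib

section
/- Let x be a string and let u and v be strings such that u is a cover of x, v is a cover of x, and |u| < |v|. Then u is a cover of v. -/
/-- `w` is a (proper, aligned-style) cover of `x`: `|w| < |x|` and there is a set `P`
of 1-based starting positions in `{1,…,n−m+1}` such that `w` occurs at every
position of `P` and the occurrences cover every position `1,…,n`. -/
def IsCover {α : Type*} (w x : List α) : Prop :=
  w.length < x.length ∧
  ∃ P : Finset ℕ,
    (∀ i ∈ P, 1 ≤ i ∧ i ≤ x.length - w.length + 1) ∧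
    (∀ i ∈ P, (x.drop (i - 1)).take w.length = w) ∧
    (P.biUnion fun i => Finset.Icc i (i + w.length - 1)) = Finset.Icc 1 x.length

/-- `u` is a border of `x`: `u ≠ x` and `u` is both a prefix and a suffix of `x`. -/
def IsBorder {α : Type*} (u x : List α) : Prop :=
  u ≠ x ∧ u <+: x ∧ u <:+ x

/-- `C` is the minimal cover array of `x` (1-based): for `1 ≤ i ≤ |x|`, `C i` is the
length of the shortest cover of `x[1..i]` if one exists, and `0` otherwise. -/
def IsMinCoverArray {α : Type*} (x : List α) (C : ℕ → ℕ) : Prop :=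
  ∀ i, 1 ≤ i → i ≤ x.length →
    ((∀ w : List α, ¬ IsCover w (x.take i)) ∧ C i = 0) ∨
    (∃ w : List α, IsCover w (x.take i) ∧ C i = w.length ∧
      ∀ v : List α, IsCover v (x.take i) → w.length ≤ v.length)

/-- `C` is the maximal cover array of `x` (1-based): for `1 ≤ i ≤ |x|`, `C i` is the
length of the longest cover of `x[1..i]` if one exists, and `0` otherwise. -/
def IsMaxCoverArray {α : Type*} (x : List α) (C : ℕ → ℕ) : Prop :=
  ∀ i, 1 ≤ i → i ≤ x.length →
    ((∀ w : List α, ¬ IsCover w (x.take i)) ∧ C i = 0) ∨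
    (∃ w : List α, IsCover w (x.take i) ∧ C i = w.length ∧
      ∀ v : List α, IsCover v (x.take i) → v.length ≤ w.length)

/-- `B` is the border array of `x` (1-based): for `1 ≤ i ≤ |x|`, `B i` is the length
of the longest border of `x[1..i]`. -/
def IsBorderArray {α : Type*} (x : List α) (B : ℕ → ℕ) : Prop :=
  ∀ i, 1 ≤ i → i ≤ x.length →
    ∃ u : List α, IsBorder u (x.take i) ∧ B i = u.length ∧
      ∀ v : List α, IsBorder v (x.take i) → v.length ≤ u.length

/-- Position `j` of the cover array `C` (of a string of length `n`) is totally covered. -/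
def TotallyCovered (n : ℕ) (C : ℕ → ℕ) (j : ℕ) : Prop :=
  C j ≠ 0 ∧ ∃ i, j < i ∧ i ≤ n ∧ C i ≠ 0 ∧
    i - C i + 1 ≤ j - C j + 1 ∧ j - C j + 1 < j

/-- `CP` is the pruned minimal cover array obtained from `C`: entries at totally
covered positions are set to `0`, all other entries are kept. -/
def IsPrunedCoverArray (n : ℕ) (C CP : ℕ → ℕ) : Prop :=
  ∀ j, 1 ≤ j → j ≤ n →
    (TotallyCovered n C j → CP j = 0) ∧ (¬ TotallyCovered n C j → CP j = C j)

/-- The cover-graph relation `R_γ` on positions `{1,…,n}` induced by the array `γ`: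
`p R_γ q` iff there are `i` with `γ i ≠ 0` and `1 ≤ j ≤ γ i` with `{p,q} = {j, i−γ i + j}`. -/
def CoverRel (n : ℕ) (γ : ℕ → ℕ) (p q : ℕ) : Prop :=
  ∃ i j, 1 ≤ i ∧ i ≤ n ∧ γ i ≠ 0 ∧ 1 ≤ j ∧ j ≤ γ i ∧
    ({p, q} : Set ℕ) = {j, i - γ i + j}


/-- If `u` and `v` both cover `x` and `|u| < |v|`, then `u` covers `v`. -/
theorem cover_of_cover_of_shorter {α : Type*} (x u v : List α)
    (hu : IsCover u x) (hv : IsCover v x) (hlen : u.length < v.length) :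
    IsCover u v := by
  obtain ⟨hmn, P, hP1, hP2, hP3⟩ := hu
  obtain ⟨hkn, Q, hQ1, hQ2, hQ3⟩ := hv
  set m := u.length with hm
  set k := v.length with hk
  set n := x.length with hn
  have hn1 : 1 ≤ n := by omega
  -- m ≥ 1
  have hm1 : 1 ≤ m := by
    by_contra h
    have hmem : (1:ℕ) ∈ P.biUnion fun i => Finset.Icc i (i + m - 1) := by
      rw [hP3]; simp [Finset.mem_Icc]; omega
    simp only [Finset.mem_biUnion, Finset.mem_Icc] at hmem
    obtain ⟨i, hi, h1, h2⟩ := hmem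
    have := (hP1 i hi).1
    omega
  have hk1 : 1 ≤ k := by omega
  -- extract coverage from P
  have covP : ∀ j, 1 ≤ j → j ≤ n → ∃ i ∈ P, i ≤ j ∧ j ≤ i + m - 1 := by
    intro j h1 h2
    have hmem : j ∈ P.biUnion fun i => Finset.Icc i (i + m - 1) := by
      rw [hP3]; simp [Finset.mem_Icc]; omega
    simp only [Finset.mem_biUnion, Finset.mem_Icc] at hmem
    obtain ⟨i, hi, h3, h4⟩ := hmem
    exact ⟨i, hi, h3, h4⟩
  have covQ : ∀ j, 1 ≤ j → j ≤ n → ∃ i ∈ Q, i ≤ j ∧ j ≤ i + k - 1 := by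
    intro j h1 h2
    have hmem : j ∈ Q.biUnion fun i => Finset.Icc i (i + k - 1) := by
      rw [hQ3]; simp [Finset.mem_Icc]; omega
    simp only [Finset.mem_biUnion, Finset.mem_Icc] at hmem
    obtain ⟨i, hi, h3, h4⟩ := hmem
    exact ⟨i, hi, h3, h4⟩
  -- v is a prefix of x
  have hvpre : x.take k = v := by
    obtain ⟨q, hq, h1, h2⟩ := covQ 1 le_rfl hn1
    have hq1 := (hQ1 q hq).1
    have hq0 : q = 1 := by omega
    subst hq0
    simpa using hQ2 1 hq
  -- v is a suffix of x
  have hvsuf : (x.drop (n - k)).take k = v := by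
    obtain ⟨q, hq, h1, h2⟩ := covQ n hn1 le_rfl
    have hq1 := (hQ1 q hq).2
    have hq2 := (hQ1 q hq).1
    have heq : q = n - k + 1 := by omega
    have h := hQ2 q hq
    rw [heq] at h
    simpa using h
  -- u is a suffix of x
  have husuf : (x.drop (n - m)).take m = u := by
    obtain ⟨i, hi, h1, h2⟩ := covP n hn1 le_rfl
    have hi1 := (hP1 i hi).2
    have hi2 := (hP1 i hi).1
    have heq : i = n - m + 1 := by omega
    have h := hP2 i hi
    rw [heq] at h
    simpa using h
  -- u is a suffix of v: occurs at position k - m + 1 in v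
  have husufv : (v.drop (k - m)).take m = u := by
    rw [← hvsuf, List.drop_take, List.take_take]
    have e1 : n - k + (k - m) = n - m := by omega
    have e2 : m ⊓ (k - (k - m)) = m := by
      have : k - (k - m) = m := by omega
      rw [this]; exact min_self m
    rw [List.drop_drop, e1, e2, husuf]
  -- inner occurrences
  have hinner : ∀ i ∈ P, i + m - 1 ≤ k → (v.drop (i - 1)).take m = u := by
    intro i hi hik
    have hi1 := (hP1 i hi).1
    rw [← hvpre, List.drop_take, List.take_take]
    have e2 : m ⊓ (k - (i - 1)) = m := by
      rw [min_eq_left]; omega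
    rw [e2]
    exact hP2 i hi
  refine ⟨hlen, (P.filter fun i => i + m - 1 ≤ k) ∪ {k - m + 1}, ?_, ?_, ?_⟩
  · intro i hi
    simp only [Finset.mem_union, Finset.mem_filter, Finset.mem_singleton] at hi
    rcases hi with ⟨hi, hik⟩ | hi
    · have := hP1 i hi
      omega
    · omega
  · intro i hi
    simp only [Finset.mem_union, Finset.mem_filter, Finset.mem_singleton] at hi
    rcases hi with ⟨hi, hik⟩ | hi
    · exact hinner i hi hik
    · subst hi
      have : k - m + 1 - 1 = k - m := by omega
      rw [this]
      exact husufv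
  · apply Finset.Subset.antisymm
    · intro j hj
      simp only [Finset.mem_biUnion, Finset.mem_union, Finset.mem_filter,
        Finset.mem_singleton, Finset.mem_Icc] at hj ⊢
      obtain ⟨i, hi, h1, h2⟩ := hj
      rcases hi with ⟨hi, hik⟩ | hi
      · have := (hP1 i hi).1
        omega
      · omega
    · intro j hj
      simp only [Finset.mem_Icc] at hj
      obtain ⟨i, hi, h1, h2⟩ := covP j hj.1 (by omega)
      simp only [Finset.mem_biUnion, Finset.mem_union, Finset.mem_filter,
        Finset.mem_singleton, Finset.mem_Icc]
      by_cases hc : i + m - 1 ≤ k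
      · exact ⟨i, Or.inl ⟨hi, hc⟩, h1, h2⟩
      · refine ⟨k - m + 1, Or.inr rfl, ?_, ?_⟩ <;> omega
end

section
/- Let x be a string of length n with minimal cover array C. Let i and j be positions with 1 ≤ j < i ≤ n, C[i] ≠ 0, C[j] ≠ 0, and j−C[j] < i−C[i]. Then (i−C[i])−(j−C[j]) > C[j]/2, i.e., 2·((i−C[i])−(j−C[j])) > C[j]. -/
lemma cover_first {α : Type*} {w x : List α} (h : IsCover w x) :
    1 ≤ w.length ∧ x.take w.length = w := by
  obtain ⟨hlen, P, hb, ho, hu⟩ := h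
  have h1 : (1:ℕ) ∈ Finset.Icc 1 x.length := by rw [Finset.mem_Icc]; omega
  rw [← hu, Finset.mem_biUnion] at h1
  obtain ⟨p, hp, hp1⟩ := h1
  rw [Finset.mem_Icc] at hp1
  have hb' := hb p hp
  have hpe : p = 1 := by omega
  have hw1 : 1 ≤ w.length := by omega
  have := ho p hp
  rw [hpe] at this
  simpa using ⟨hw1, this⟩

lemma cover_last {α : Type*} {w x : List α} (h : IsCover w x) :
    x.drop (x.length - w.length) = w := by
  obtain ⟨hw1, -⟩ := cover_first h
  obtain ⟨hlen, P, hb, ho, hu⟩ := h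
  have h1 : x.length ∈ Finset.Icc 1 x.length := by rw [Finset.mem_Icc]; omega
  rw [← hu, Finset.mem_biUnion] at h1
  obtain ⟨p, hp, hp1⟩ := h1
  rw [Finset.mem_Icc] at hp1
  have hb' := hb p hp
  have hpe : p = x.length - w.length + 1 := by omega
  have := ho p hp
  rw [hpe] at this
  simp only [Nat.add_sub_cancel] at this
  have hle : (x.drop (x.length - w.length)).length ≤ w.length := by
    rw [List.length_drop]; omega
  exact (List.take_of_length_le hle).symm.trans this

/-- For positions `j < i` with `C i ≠ 0`, `C j ≠ 0` and
`j − C j < i − C i`, we have `(i − C i) − (j − C j) > C j / 2`,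
i.e. `2·((i − C i) − (j − C j)) > C j`. -/
theorem minCoverArray_gap {α : Type*} (x : List α) (C : ℕ → ℕ)
    (hC : IsMinCoverArray x C) (i j : ℕ)
    (hj1 : 1 ≤ j) (hji : j < i) (hin : i ≤ x.length)
    (hCi : C i ≠ 0) (hCj : C j ≠ 0)
    (hlt : j - C j < i - C i) :
    C j < 2 * ((i - C i) - (j - C j)) := by
  by_contra hcon
  push_neg at hcon
  have hjn : j ≤ x.length := le_trans (le_of_lt hji) hin
  have hlti : (x.take i).length = i := by simp [hin]
  have hltj : (x.take j).length = j := by simp [hjn]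
  rcases hC i (by omega) hin with ⟨-, h0⟩ | ⟨wi, hwi, hCieq, -⟩
  · exact hCi h0
  rcases hC j hj1 hjn with ⟨-, h0⟩ | ⟨wj, hwj, hCjeq, hmin⟩
  · exact hCj h0
  have hwilen : wi.length = C i := hCieq.symm
  have hwjlen : wj.length = C j := hCjeq.symm
  have hCii : C i < i := by rw [← hwilen, ← hlti]; exact hwi.1
  have hCjj : C j < j := by rw [← hwjlen, ← hltj]; exact hwj.1
  have hCj1 : 1 ≤ C j := by omega
  set a := i - C i with ha
  set b := j - C j with hb
  set d := a - b with hd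
  have haj : a < j := by
    by_contra hge
    push_neg at hge
    omega
  set m := C j - d with hm
  have hdm : d + m = C j := by omega
  have hd1 : 1 ≤ d := by omega
  have hdle : d ≤ m := by omega
  have hmCi : m ≤ C i := by omega
  have hmlen : m ≤ x.length := by omega
  -- wi and wj are the prefixes of x of their lengths
  have hwiP : x.take (C i) = wi := by
    have h1 := (cover_first hwi).2
    rw [hwilen, List.take_take, min_eq_left (by omega)] at h1
    exact h1
  have hwjP : x.take (C j) = wj := by
    have h1 := (cover_first hwj).2
    rw [hwjlen, List.take_take, min_eq_left (by omega)] at h1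
    exact h1
  -- wi and wj are suffixes of x.take i, x.take j
  have hwiS : (x.take i).drop a = wi := by
    have h1 := cover_last hwi
    rwa [hlti, hwilen] at h1
  have hwjS : (x.take j).drop b = wj := by
    have h1 := cover_last hwj
    rwa [hltj, hwjlen] at h1
  set u := x.take m with hu
  have hulen : u.length = m := by simp [hu, hmlen]
  -- key: u is the suffix of wj of length m
  have hkey : wj.drop d = u := by
    have h1 : wj.drop d = (x.take j).drop a := by
      rw [← hwjS, List.drop_drop]
      congr 1
      omega
    have h2 : x.take j = (x.take i).take j := by
      rw [List.take_take, min_eq_left (le_of_lt hji)]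
    rw [h1, h2, List.drop_take, hwiS, ← hwiP, List.take_take,
      min_eq_left (by omega)]
    have : j - a = m := by omega
    rw [this]
  -- u is a prefix of wj
  have hupre : wj.take m = u := by
    rw [← hwjP, List.take_take, min_eq_left (by omega)]
  -- build a cover of x.take j by u
  obtain ⟨hlw, Pw, hbw, how, huw⟩ := hwj
  rw [hltj, hwjlen] at hbw
  rw [hwjlen] at how
  rw [hltj, hwjlen] at huw
  have hcover : IsCover u (x.take j) := by
    refine ⟨by rw [hulen, hltj]; omega, Pw.biUnion fun p => {p, p + d}, ?_, ?_, ?_⟩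
    · intro q hq
      rw [Finset.mem_biUnion] at hq
      obtain ⟨p, hp, hq⟩ := hq
      have hb' := hbw p hp
      simp only [Finset.mem_insert, Finset.mem_singleton] at hq
      rw [hulen, hltj]
      rcases hq with rfl | rfl <;> omega
    · intro q hq
      rw [Finset.mem_biUnion] at hq
      obtain ⟨p, hp, hq⟩ := hq
      have hocc := how p hp
      simp only [Finset.mem_insert, Finset.mem_singleton] at hq
      rw [hulen]
      rcases hq with rfl | rfl
      · rw [← hupre, ← hocc, List.take_take, min_eq_left (by omega)]
      · have hb' := hbw p hp
        have hdrop : (x.take j).drop (p + d - 1) = ((x.take j).drop (p - 1)).drop d := by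
          rw [List.drop_drop]
          congr 1
          omega
        rw [hdrop, hm, ← List.drop_take, hocc]
        exact hkey
    · have hmem : ∀ k, (∃ p ∈ Pw, p ≤ k ∧ k ≤ p + C j - 1) ↔ 1 ≤ k ∧ k ≤ j := by
        intro k
        rw [← Finset.mem_Icc, ← huw, Finset.mem_biUnion]
        simp [Finset.mem_Icc]
      ext k
      rw [Finset.mem_biUnion, Finset.mem_Icc, hltj, ← hmem k]
      constructor
      · rintro ⟨q, hq, hkq⟩
        rw [Finset.mem_biUnion] at hq
        obtain ⟨p, hp, hq⟩ := hq
        simp only [Finset.mem_insert, Finset.mem_singleton] at hq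
        rw [Finset.mem_Icc, hulen] at hkq
        exact ⟨p, hp, by rcases hq with rfl | rfl <;> omega⟩
      · rintro ⟨p, hp, hpk⟩
        by_cases hcase : k ≤ p + m - 1
        · refine ⟨p, ?_, ?_⟩
          · rw [Finset.mem_biUnion]
            exact ⟨p, hp, by simp⟩
          · rw [Finset.mem_Icc, hulen]
            omega
        · refine ⟨p + d, ?_, ?_⟩
          · rw [Finset.mem_biUnion]
            exact ⟨p, hp, by simp⟩
          · rw [Finset.mem_Icc, hulen]
            omega
  have := hmin u hcover
  rw [hulen, hwjlen] at this
  omega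
end

section
/- Let x be a string of length n with minimal cover array C, and let C^P be the pruned minimal cover array obtained from C. Then the sum of the entries of C^P is at most 2n, i.e., Σ_{i=1}^{n} C^P[i] ≤ 2n. -/
namespace PrunedAux
variable {α : Type*}

lemma occ_point {x : List α} {j i m : ℕ} (hi : 1 ≤ i)
    (him : i + m ≤ j + 1)
    (hs : ((x.take j).drop (i - 1)).take m = x.take m) :
    ∀ t, t < m → x[(i - 1) + t]? = x[t]? := by
  intro t ht
  have h := congrArg (fun l => l[t]?) hs
  simp only [List.getElem?_take, List.getElem?_drop, if_pos ht] at h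
  rwa [if_pos (by omega : (i - 1) + t < j)] at h

lemma cover_occ {w y : List α} (h : IsCover w y) {p : ℕ} (hp1 : 1 ≤ p) (hp2 : p ≤ y.length) :
    ∃ i, 1 ≤ i ∧ i + w.length ≤ y.length + 1 ∧ i ≤ p ∧ p + 1 ≤ i + w.length ∧
      (y.drop (i - 1)).take w.length = w := by
  obtain ⟨hlt, P, hP1, hP2, hP3⟩ := h
  have hp : p ∈ P.biUnion fun i => Finset.Icc i (i + w.length - 1) := by
    rw [hP3]; exact Finset.mem_Icc.2 ⟨hp1, hp2⟩
  obtain ⟨i, hiP, hpi⟩ := Finset.mem_biUnion.1 hp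
  rw [Finset.mem_Icc] at hpi
  obtain ⟨h1, h2⟩ := hP1 i hiP
  exact ⟨i, h1, by omega, hpi.1, by omega, hP2 i hiP⟩

lemma cover_prefix {w y : List α} (h : IsCover w y) (hy : 1 ≤ y.length) :
    w = y.take w.length := by
  obtain ⟨i, h1, h2, h3, h4, h5⟩ := cover_occ h le_rfl hy
  have hi : i = 1 := le_antisymm h3 h1
  subst hi
  simpa using h5.symm

lemma extract {x : List α} {C : ℕ → ℕ} (hC : IsMinCoverArray x C) {j : ℕ}
    (h1 : 1 ≤ j) (h2 : j ≤ x.length) (hne : C j ≠ 0) :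
    IsCover (x.take (C j)) (x.take j) ∧ 1 ≤ C j ∧ C j < j ∧
      ∀ v : List α, IsCover v (x.take j) → C j ≤ v.length := by
  rcases hC j h1 h2 with ⟨_, h0⟩ | ⟨w, hw, hlen, hmin⟩
  · exact absurd h0 hne
  have hyl : (x.take j).length = j := by rw [List.length_take]; omega
  have hlt : w.length < j := by have := hw.1; rwa [hyl] at this
  have hwp : w = (x.take j).take w.length := cover_prefix hw (by omega)
  have hw' : w = x.take (C j) := by
    rw [hwp, List.take_take, min_eq_left (by omega), hlen]
  have hwpos : 1 ≤ w.length := by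
    obtain ⟨i, h1', h2', h3', h4', _⟩ := cover_occ hw le_rfl (by omega)
    omega
  refine ⟨hw' ▸ hw, by omega, by omega, fun v hv => hlen ▸ hmin v hv⟩

lemma suffix_point {x : List α} {j m : ℕ} (hj : j ≤ x.length) (h1 : 1 ≤ j)
    (hc : IsCover (x.take m) (x.take j)) (hm1 : 1 ≤ m) (hmj : m < j) :
    ∀ t, t < m → x[(j - m) + t]? = x[t]? := by
  have hyl : (x.take j).length = j := by rw [List.length_take]; omega
  have hwl : (x.take m).length = m := by rw [List.length_take]; omega
  obtain ⟨i, hi1, hi2, hi3, hi4, hi5⟩ := cover_occ hc (p := j) h1 (by omega)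
  rw [hwl] at hi2 hi4 hi5
  rw [hyl] at hi2
  have hieq : i - 1 = j - m := by omega
  intro t ht
  have := occ_point hi1 (by omega) hi5 t ht
  rwa [hieq] at this

lemma per_iter {x : List α} {d m : ℕ} (hper : ∀ t, t + d < m → x[t + d]? = x[t]?) :
    ∀ i t, t + i * d < m → x[t + i * d]? = x[t]? := by
  intro i
  induction i with
  | zero => intro t ht; simp
  | succ i ih =>
      intro t ht
      have hm : (i + 1) * d = i * d + d := by ring
      have e1 : x[(t + i * d) + d]? = x[t + i * d]? := hper _ (by omega)
      have e2 := ih t (by omega)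
      rw [show t + (i + 1) * d = (t + i * d) + d by omega, e1, e2]

lemma build_cover {x : List α} {j m d : ℕ} (hj : j ≤ x.length) (hm1 : 1 ≤ m) (hmj : m < j)
    (hd1 : 1 ≤ d) (hd2 : 2 * d ≤ m)
    (hper : ∀ t, t + d < m → x[t + d]? = x[t]?)
    (hcov : IsCover (x.take m) (x.take j)) :
    ∃ u : List α, IsCover u (x.take j) ∧ u.length < m := by
  obtain ⟨hlt, P, hP1, hP2, hP3⟩ := hcov
  have hyl : (x.take j).length = j := by rw [List.length_take]; omega
  have hwl : (x.take m).length = m := by rw [List.length_take]; omega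
  rw [hwl] at hP1 hP2 hP3
  rw [hyl] at hP1 hP3
  set k := m / d with hk
  have hmod : d * k + m % d = m := Nat.div_add_mod m d
  have hmodlt : m % d < d := Nat.mod_lt _ (by omega)
  have hk2 : 2 ≤ k := (Nat.le_div_iff_mul_le (by omega)).2 (by omega)
  have hbridge : d * k = (k - 1) * d + d := by
    have h1 : k - 1 + 1 = k := by omega
    calc d * k = ((k - 1) + 1) * d := by rw [h1, Nat.mul_comm]
      _ = (k - 1) * d + d := by ring
  set e := m - (k - 1) * d with he
  have hE : (k - 1) * d + e = m := by omega
  have hed : d ≤ e := by omega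
  have hem : e < m := by
    have hC1 : d ≤ (k - 1) * d := by
      calc d = 1 * d := (one_mul d).symm
        _ ≤ (k - 1) * d := Nat.mul_le_mul_right d (by omega)
    omega
  have hul : (x.take e).length = e := by rw [List.length_take]; omega
  refine ⟨x.take e, ⟨?_, P.biUnion fun q => (Finset.range k).image fun i => q + i * d,
    ?_, ?_, ?_⟩, by omega⟩
  · rw [hul, hyl]; omega
  · intro i' hi'
    obtain ⟨q, hqP, hq2⟩ := Finset.mem_biUnion.1 hi'
    obtain ⟨i, hik, rfl⟩ := Finset.mem_image.1 hq2
    rw [Finset.mem_range] at hik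
    obtain ⟨hq1, hq2'⟩ := hP1 q hqP
    have hid : i * d ≤ (k - 1) * d := Nat.mul_le_mul_right d (by omega)
    rw [hul, hyl]
    omega
  · intro i' hi'
    obtain ⟨q, hqP, hq2⟩ := Finset.mem_biUnion.1 hi'
    obtain ⟨i, hik, rfl⟩ := Finset.mem_image.1 hq2
    rw [Finset.mem_range] at hik
    obtain ⟨hq1, hq2'⟩ := hP1 q hqP
    have hid : i * d ≤ (k - 1) * d := Nat.mul_le_mul_right d (by omega)
    have hocc : ∀ r, r < m → x[(q - 1) + r]? = x[r]? :=
      occ_point hq1 (by omega) (hP2 q hqP)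
    rw [hul]
    apply List.ext_getElem?
    intro t
    by_cases htE : t < e
    · have L : (((x.take j).drop (q + i * d - 1)).take e)[t]? = x[(q - 1) + (i * d + t)]? := by
        rw [List.getElem?_take, if_pos htE, List.getElem?_drop, List.getElem?_take,
          if_pos (by omega : (q + i * d - 1) + t < j)]
        congr 1
        omega
      have R : (x.take e)[t]? = x[t]? := by rw [List.getElem?_take, if_pos htE]
      rw [L, R, hocc (i * d + t) (by omega),
        show i * d + t = t + i * d by omega,
        per_iter hper i t (by omega)]
    · rw [List.getElem?_eq_none, List.getElem?_eq_none]
      · rw [List.length_take]; omega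
      · rw [List.length_take]
        exact le_trans (min_le_left _ _) (by omega)
  · rw [hul, hyl]
    ext p
    simp only [Finset.mem_biUnion, Finset.mem_image, Finset.mem_range, Finset.mem_Icc]
    constructor
    · rintro ⟨i', ⟨q, hqP, i, hik, rfl⟩, hp1, hp2⟩
      obtain ⟨hq1, hq2'⟩ := hP1 q hqP
      have hid : i * d ≤ (k - 1) * d := Nat.mul_le_mul_right d (by omega)
      omega
    · rintro ⟨hp1, hp2⟩
      have hpmem : p ∈ P.biUnion fun i => Finset.Icc i (i + m - 1) := by
        rw [hP3]; exact Finset.mem_Icc.2 ⟨hp1, hp2⟩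
      obtain ⟨q, hqP, hpq⟩ := Finset.mem_biUnion.1 hpmem
      rw [Finset.mem_Icc] at hpq
      obtain ⟨hq1, hq2'⟩ := hP1 q hqP
      set c := p - q with hc
      set a := c / d with ha
      have hDc : d * a + c % d = c := Nat.div_add_mod c d
      have hcd : c % d < d := Nat.mod_lt _ (by omega)
      by_cases hak : a ≤ k - 1
      · refine ⟨q + a * d, ⟨q, hqP, a, by omega, rfl⟩, ?_, ?_⟩
        · have : a * d = d * a := Nat.mul_comm a d
          omega
        · have : a * d = d * a := Nat.mul_comm a d
          omega
      · refine ⟨q + (k - 1) * d, ⟨q, hqP, k - 1, by omega, rfl⟩, ?_, ?_⟩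
        · have h1 : d * (k - 1) ≤ d * a := Nat.mul_le_mul_left d (by omega)
          have h2 : (k - 1) * d = d * (k - 1) := Nat.mul_comm _ _
          omega
        · omega

lemma pair_lemma {x : List α} {C : ℕ → ℕ} (hC : IsMinCoverArray x C) {j₀ j : ℕ}
    (h0 : 1 ≤ j₀) (hjj : j₀ < j) (hj : j ≤ x.length) (hc0 : C j₀ ≠ 0) (hc : C j ≠ 0)
    (hnt : ¬ TotallyCovered x.length C j₀) :
    C j₀ + 2 * (j₀ - C j₀ + 1) ≤ 2 * (j - C j + 1) := by
  have hj0n : j₀ ≤ x.length := by omega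
  obtain ⟨hcov₀, hm01, hm0j, hmin₀⟩ := extract hC h0 hj0n hc0
  obtain ⟨hcov, hm1, hmj, hmin⟩ := extract hC (by omega) hj hc
  have E2 : ∀ t, t < C j → x[(j - C j) + t]? = x[t]? :=
    suffix_point hj (by omega) hcov hm1 hmj
  by_contra hgoal
  rcases Nat.lt_or_ge (C j₀) 2 with hm0 | hm0
  · -- C j₀ = 1 : the prefix x.take j₀ is constant, contradiction with minimality at j
    have hm0e : C j₀ = 1 := by omega
    have hs1 : j - C j + 1 ≤ j₀ := by omega
    have hm2 : 2 ≤ C j := by omega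
    -- every char of x.take j₀ equals x[0]?
    have hyl₀ : (x.take j₀).length = j₀ := by rw [List.length_take]; omega
    have hw1l : (x.take (1 : ℕ)).length = 1 := by rw [List.length_take]; omega
    have hcov1 : IsCover (x.take (1 : ℕ)) (x.take j₀) := by rw [← hm0e]; exact hcov₀
    have hconst : ∀ t, t < j₀ → x[t]? = x[0]? := by
      intro t ht
      obtain ⟨i, hi1, hi2, hi3, hi4, hi5⟩ := cover_occ hcov1 (p := t + 1) (by omega) (by omega)
      rw [hw1l] at hi2 hi4 hi5
      rw [hyl₀] at hi2
      have hieq : i = t + 1 := by omega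
      have := occ_point hi1 (by omega) hi5 0 (by omega)
      rw [hieq] at this
      simpa using this
    have claim : ∀ t, t < j → x[t]? = x[0]? := by
      intro t
      induction t using Nat.strong_induction_on with
      | _ t ih =>
        intro ht
        by_cases h' : t < j₀
        · exact hconst t h'
        · have h2 := E2 (t - (j - C j)) (by omega)
          rw [show (j - C j) + (t - (j - C j)) = t by omega] at h2
          rw [h2]
          exact ih (t - (j - C j)) (by omega) (by omega)
    have hyl : (x.take j).length = j := by rw [List.length_take]; omega
    have hcoolcov : IsCover (x.take (1 : ℕ)) (x.take j) := by
      refine ⟨by rw [hw1l, hyl]; omega, Finset.Icc 1 j, ?_, ?_, ?_⟩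
      · intro i hi
        rw [Finset.mem_Icc] at hi
        rw [hw1l, hyl]
        omega
      · intro i hi
        rw [Finset.mem_Icc] at hi
        rw [hw1l]
        apply List.ext_getElem?
        intro t
        by_cases ht0 : t = 0
        · subst ht0
          have L : (((x.take j).drop (i - 1)).take 1)[0]? = x[i - 1]? := by
            rw [List.getElem?_take, if_pos (by omega : (0:ℕ) < 1), List.getElem?_drop,
              List.getElem?_take, if_pos (by omega : (i - 1) + 0 < j)]
            congr 1
          have R : (x.take (1 : ℕ))[0]? = x[0]? := by
            rw [List.getElem?_take, if_pos (by omega : (0:ℕ) < 1)]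
          rw [L, R]
          exact claim (i - 1) (by omega)
        · rw [List.getElem?_eq_none, List.getElem?_eq_none]
          · rw [List.length_take]; omega
          · rw [List.length_take]
            exact le_trans (min_le_left _ _) (by omega)
      · rw [hw1l, hyl]
        ext p
        simp only [Finset.mem_biUnion, Finset.mem_Icc]
        constructor
        · rintro ⟨i, ⟨hi1, hi2⟩, hp1, hp2⟩
          omega
        · intro hp
          exact ⟨p, ⟨by omega, by omega⟩, by omega, by omega⟩
    have := hmin (x.take (1 : ℕ)) hcoolcov
    rw [hw1l] at this
    omega
  · -- C j₀ ≥ 2 : periodicity contradiction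
    have hs01 : j₀ - C j₀ + 1 < j - C j + 1 := by
      by_contra hcon
      exact hnt ⟨hc0, j, hjj, hj, hc, by omega, by omega⟩
    have E1 : ∀ t, t < C j₀ → x[(j₀ - C j₀) + t]? = x[t]? :=
      suffix_point hj0n (by omega) hcov₀ (by omega) hm0j
    have hd2 : 2 * ((j - C j) - (j₀ - C j₀)) ≤ C j₀ := by omega
    have hper : ∀ t, t + ((j - C j) - (j₀ - C j₀)) < C j₀ →
        x[t + ((j - C j) - (j₀ - C j₀))]? = x[t]? := by
      intro t ht
      have e1 := (E1 (t + ((j - C j) - (j₀ - C j₀))) ht).symm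
      have e2 := E2 t (by omega)
      rw [e1, show (j₀ - C j₀) + (t + ((j - C j) - (j₀ - C j₀))) = (j - C j) + t by omega, e2]
    obtain ⟨u, hu, hul⟩ := build_cover hj0n hm01 hm0j (by omega) hd2 hper hcov₀
    exact absurd (hmin₀ u hu) (by omega)

end PrunedAux

/-- The sum of the entries of the pruned minimal cover array is at most `2n`. -/
theorem prunedCoverArray_sum_le {α : Type*} (x : List α) (C CP : ℕ → ℕ)
    (hC : IsMinCoverArray x C) (hP : IsPrunedCoverArray x.length C CP) :
    ∑ i ∈ Finset.Icc 1 x.length, CP i ≤ 2 * x.length := by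
  set n := x.length with hn
  set S : Finset ℕ := (Finset.Icc 1 n).filter (fun j => CP j ≠ 0) with hS
  -- facts for members of S
  have hSfact : ∀ t ∈ S, 1 ≤ t ∧ t ≤ n ∧ ¬ TotallyCovered n C t ∧ CP t = C t ∧ C t ≠ 0 := by
    intro t ht
    rw [hS, Finset.mem_filter, Finset.mem_Icc] at ht
    obtain ⟨⟨ht1, ht2⟩, ht3⟩ := ht
    obtain ⟨hTC, hNTC⟩ := hP t ht1 ht2
    have hnt : ¬ TotallyCovered n C t := fun h => ht3 (hTC h)
    have heq : CP t = C t := hNTC hnt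
    exact ⟨ht1, ht2, hnt, heq, fun h => ht3 (heq.trans h)⟩
  have hsum : ∑ i ∈ Finset.Icc 1 n, CP i = ∑ i ∈ S, C i := by
    rw [hS, ← Finset.sum_filter_ne_zero (Finset.Icc 1 n)]
    exact Finset.sum_congr rfl (fun t ht => ((hSfact t ht).2.2.2.1))
  rw [hsum]
  have key : ∀ j, j ∈ S → (∑ t ∈ S.filter (· ≤ j), C t) + 2 ≤ 2 * (j - C j + 1) + C j := by
    intro j
    induction j using Nat.strong_induction_on with
    | _ j ih =>
      intro hjS
      obtain ⟨hj1, hj2, hjnt, hjeq, hjne⟩ := hSfact j hjS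
      by_cases hS' : (S.filter (· < j)).Nonempty
      · set j₀ := (S.filter (· < j)).max' hS' with hj₀
        have hj₀mem := (S.filter (· < j)).max'_mem hS'
        rw [Finset.mem_filter] at hj₀mem
        obtain ⟨hj₀S, hj₀lt⟩ := hj₀mem
        obtain ⟨h01, h02, h0nt, h0eq, h0ne⟩ := hSfact j₀ hj₀S
        have hpair := PrunedAux.pair_lemma hC h01 hj₀lt hj2 h0ne hjne h0nt
        have hIH := ih j₀ hj₀lt hj₀S
        have hset : S.filter (· ≤ j) = insert j (S.filter (· ≤ j₀)) := by
          ext t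
          simp only [Finset.mem_filter, Finset.mem_insert]
          constructor
          · rintro ⟨htS, htj⟩
            rcases eq_or_lt_of_le htj with h | h
            · exact Or.inl h
            · refine Or.inr ⟨htS, ?_⟩
              exact Finset.le_max' (S.filter (· < j)) t (Finset.mem_filter.2 ⟨htS, h⟩)
          · rintro (rfl | ⟨htS, h⟩)
            · exact ⟨hjS, le_rfl⟩
            · exact ⟨htS, by omega⟩
        have hnotmem : j ∉ S.filter (· ≤ j₀) := by
          rw [Finset.mem_filter]
          rintro ⟨-, h⟩
          omega
        rw [hset, Finset.sum_insert hnotmem]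
        omega
      · have hset : S.filter (· ≤ j) = {j} := by
          ext t
          simp only [Finset.mem_filter, Finset.mem_singleton]
          constructor
          · rintro ⟨htS, htj⟩
            by_contra hne
            exact hS' ⟨t, Finset.mem_filter.2 ⟨htS, (by omega : t < j)⟩⟩
          · rintro rfl
            exact ⟨hjS, le_rfl⟩
        rw [hset, Finset.sum_singleton]
        omega
  rcases S.eq_empty_or_nonempty with hSe | hSne
  · rw [hSe]; simp
  · set jm := S.max' hSne with hjm
    have hjmS := S.max'_mem hSne
    obtain ⟨hm1, hm2, hmnt, hmeq, hmne⟩ := hSfact jm hjmS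
    obtain ⟨-, hCm1, hCmlt, -⟩ := PrunedAux.extract hC hm1 hm2 hmne
    have hfil : S.filter (· ≤ jm) = S :=
      Finset.filter_true_of_mem (fun t ht => Finset.le_max' S t ht)
    have := key jm hjmS
    rw [hfil] at this
    omega
end

section
/- Let x be a string of length n with minimal cover array C and border array B. For every position i with 2 ≤ i ≤ n, if B[i] ≤ B[i−1], then C[i] = 0. -/
/-- Euclid-style two-period lemma: if `f` has periods `μ` and `ν` on `[0, M]`
with `μ + ν ≤ M + 2`, then `f (M+1-μ) = f (M+1-ν)`. -/
theorem periodQ {β : Type*} (f : ℕ → β) (μ ν M : ℕ) (hμ : 1 ≤ μ) (hν : 1 ≤ ν)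
    (hsum : μ + ν ≤ M + 2)
    (h1 : ∀ k, k + μ ≤ M → f k = f (k + μ))
    (h2 : ∀ k, k + ν ≤ M → f k = f (k + ν)) :
    f (M + 1 - μ) = f (M + 1 - ν) := by
  rcases lt_trichotomy μ ν with hlt | heq | hgt
  · have key := periodQ f μ (ν - μ) (M - μ) hμ (by omega) (by omega)
      (fun k hk => h1 k (by omega))
      (fun k hk => by
        have e1 : f k = f (k + ν) := h2 k (by omega)
        have e2 : f (k + (ν - μ)) = f (k + (ν - μ) + μ) := h1 _ (by omega)
        have e3 : k + (ν - μ) + μ = k + ν := by omega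
        rw [e3] at e2
        rw [e1, ← e2])
    have r1 : M - μ + 1 - μ = M + 1 - 2 * μ := by omega
    have r2 : M - μ + 1 - (ν - μ) = M + 1 - ν := by omega
    rw [r1, r2] at key
    have e4 : f (M + 1 - 2 * μ) = f (M + 1 - 2 * μ + μ) := h1 _ (by omega)
    have e5 : M + 1 - 2 * μ + μ = M + 1 - μ := by omega
    rw [e5] at e4
    rw [← e4, key]
  · rw [heq]
  · have key := periodQ f ν (μ - ν) (M - ν) hν (by omega) (by omega)
      (fun k hk => h2 k (by omega))
      (fun k hk => by
        have e1 : f k = f (k + μ) := h1 k (by omega)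
        have e2 : f (k + (μ - ν)) = f (k + (μ - ν) + ν) := h2 _ (by omega)
        have e3 : k + (μ - ν) + ν = k + μ := by omega
        rw [e3] at e2
        rw [e1, ← e2])
    have r1 : M - ν + 1 - ν = M + 1 - 2 * ν := by omega
    have r2 : M - ν + 1 - (μ - ν) = M + 1 - μ := by omega
    rw [r1, r2] at key
    have e4 : f (M + 1 - 2 * ν) = f (M + 1 - 2 * ν + ν) := h2 _ (by omega)
    have e5 : M + 1 - 2 * ν + ν = M + 1 - ν := by omega
    rw [e5] at e4
    rw [← key, ← e4]
termination_by μ + ν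
decreasing_by all_goals omega

/-- In a `W`-covered range, every occurrence of `W` minus its last letter
extends to a full occurrence. -/
theorem coverExtend {β : Type*} (Y W : ℕ → β) (n m t : ℕ) (hm : 1 ≤ m)
    (hcov : ∀ j, j < n → ∃ a, a + m ≤ n ∧ a ≤ j ∧ j < a + m ∧ ∀ k, k < m → Y (a + k) = W k)
    (ht : t + m ≤ n)
    (hnear : ∀ k, k + 1 < m → Y (t + k) = W k) :
    Y (t + (m - 1)) = W (m - 1) := by
  classical
  set z := t + (m - 1) with hz
  have hzn : z < n := by omega
  obtain ⟨a0, ha0n, ha0le, ha0lt, ha0occ⟩ := hcov t (by omega)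
  by_cases ha0 : a0 = t
  · subst ha0; exact ha0occ (m - 1) (by omega)
  have ha0t : a0 < t := by omega
  have hm2 : 2 ≤ m := by omega
  set Pnd : ℕ → Prop := fun fe => t ≤ fe ∧ ∃ a, a + m ≤ n ∧ a + (m - 1) = fe ∧
      ∀ k, k < m → Y (a + k) = W k with hPnd
  have hPe0 : Pnd (a0 + (m - 1)) := ⟨by omega, a0, ha0n, rfl, ha0occ⟩
  have he0le : a0 + (m - 1) ≤ z - 1 := by omega
  set fmax := Nat.findGreatest Pnd (z - 1) with hfmax
  have hPf : Pnd fmax := Nat.findGreatest_spec he0le hPe0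
  have hfle : fmax ≤ z - 1 := Nat.findGreatest_le _
  obtain ⟨htf, af, hafn, hafe, hafocc⟩ := hPf
  set ν := z - fmax with hν
  have hν1 : 1 ≤ ν := by omega
  have hνm : ν ≤ m - 1 := by omega
  have haft : af + ν = t := by omega
  have hfull : ∀ k, ν ≤ k → k < m → W k = W (k - ν) := by
    intro k hk1 hk2
    have e1 : Y (af + k) = W k := hafocc k hk2
    have e2 : af + k = t + (k - ν) := by omega
    have e3 : Y (t + (k - ν)) = W (k - ν) := hnear _ (by omega)
    rw [← e1, e2, e3]
  obtain ⟨a1, ha1n, ha1le, ha1lt, ha1occ⟩ := hcov (fmax + 1) (by omega)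
  have he1 : z ≤ a1 + (m - 1) := by
    by_contra hcon
    push_neg at hcon
    have hng := Nat.findGreatest_is_greatest (P := Pnd) (n := z - 1)
      (k := a1 + (m - 1)) (by omega) (by omega)
    exact hng ⟨by omega, a1, ha1n, rfl, ha1occ⟩
  have ha1t : t ≤ a1 := by omega
  set μ := a1 - t with hμdef
  have hμν : μ + ν ≤ m := by omega
  have hYz : Y z = W (m - 1 - μ) := by
    have h := ha1occ (z - a1) (by omega)
    have e : a1 + (z - a1) = z := by omega
    have e2 : z - a1 = m - 1 - μ := by omega
    rw [e, e2] at h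
    exact h
  by_cases hμ0 : μ = 0
  · simpa [hμ0] using hYz
  have hμ1 : 1 ≤ μ := by omega
  have hpμ : ∀ k, k + μ ≤ m - 2 → W k = W (k + μ) := by
    intro k hk
    have e1 : Y (a1 + k) = W k := ha1occ k (by omega)
    have e2 : a1 + k = t + (k + μ) := by omega
    have e3 : Y (t + (k + μ)) = W (k + μ) := hnear _ (by omega)
    rw [← e1, e2, e3]
  have hpν : ∀ k, k + ν ≤ m - 2 → W k = W (k + ν) := by
    intro k hk
    have h := hfull (k + ν) (by omega) (by omega)
    have e : k + ν - ν = k := by omega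
    rw [e] at h
    exact h.symm
  have hQ := periodQ W μ ν (m - 2) hμ1 hν1 (by omega) hpμ hpν
  have e1 : m - 2 + 1 - μ = m - 1 - μ := by omega
  have e2 : m - 2 + 1 - ν = m - 1 - ν := by omega
  rw [e1, e2] at hQ
  have e3 : W (m - 1) = W (m - 1 - ν) := hfull (m - 1) (by omega) (by omega)
  rw [hYz, hQ, ← e3]


/-- If `B i ≤ B (i−1)` then `C i = 0`, for `2 ≤ i ≤ n`. -/
theorem coverArray_zero_of_border_nonincreasing {α : Type*} (x : List α) (C B : ℕ → ℕ)
    (hC : IsMinCoverArray x C) (hB : IsBorderArray x B)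
    (i : ℕ) (hi1 : 2 ≤ i) (hi2 : i ≤ x.length)
    (h : B i ≤ B (i - 1)) : C i = 0 := by
  classical
  rcases hC i (by omega) hi2 with ⟨_, h0⟩ | ⟨w, hcov, hCi, _⟩
  · exact h0
  exfalso
  have hylen : (x.take i).length = i := by
    rw [List.length_take]; omega
  obtain ⟨hwlt, P, hP1, hP2, hP3⟩ := hcov
  have hmi : w.length < i := by rwa [hylen] at hwlt
  -- pointwise occurrences (0-based)
  have hOcc : ∀ j, j < i → ∃ a, a + w.length ≤ i ∧ a ≤ j ∧ j < a + w.length ∧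
      ∀ k, k < w.length → (x.take i)[a + k]? = w[k]? := by
    intro j hj
    have hmem : (j + 1) ∈ P.biUnion (fun p => Finset.Icc p (p + w.length - 1)) := by
      rw [hP3, hylen, Finset.mem_Icc]; omega
    rw [Finset.mem_biUnion] at hmem
    obtain ⟨p, hpP, hpmem⟩ := hmem
    rw [Finset.mem_Icc] at hpmem
    obtain ⟨hp1, hp2⟩ := hP1 p hpP
    rw [hylen] at hp2
    have hocc := hP2 p hpP
    refine ⟨p - 1, by omega, by omega, by omega, ?_⟩
    intro k hk
    have hw : w[k]? = (((x.take i).drop (p - 1)).take w.length)[k]? := by rw [hocc]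
    rw [List.getElem?_take, if_pos hk, List.getElem?_drop] at hw
    exact hw.symm
  -- w is a prefix (0-based pointwise)
  obtain ⟨a0, _, ha0le, ha0lt, ha0occ⟩ := hOcc 0 (by omega)
  have ha00 : a0 = 0 := by omega
  subst ha00
  have hm1 : 1 ≤ w.length := by omega
  have hpre : ∀ k, k < w.length → (x.take i)[k]? = w[k]? := by
    intro k hk
    have := ha0occ k hk
    rwa [Nat.zero_add] at this
  -- w is a suffix (0-based pointwise)
  obtain ⟨a1, ha1n, ha1le, ha1lt, ha1occ⟩ := hOcc (i - 1) (by omega)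
  have ha1eq : a1 = i - w.length := by omega
  subst ha1eq
  -- borders
  obtain ⟨u, hub, hBi, humax⟩ := hB i (by omega) hi2
  obtain ⟨u', hub', hBi', _⟩ := hB (i - 1) (by omega) (by omega)
  rw [hBi, hBi'] at h
  have h2len : (x.take (i - 1)).length = i - 1 := by
    rw [List.length_take]; omega
  -- w is a border of x.take i, hence w.length ≤ u.length
  have hwpre : w <+: x.take i := by
    rw [List.prefix_iff_eq_take]
    apply List.ext_getElem?
    intro k
    by_cases hk : k < w.length
    · rw [List.getElem?_take, if_pos hk, hpre k hk]
    · rw [List.getElem?_take, if_neg hk, List.getElem?_eq_none (by omega)]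
  have hwsuf : w <:+ x.take i := by
    rw [List.suffix_iff_eq_drop, hylen]
    apply List.ext_getElem?
    intro k
    rw [List.getElem?_drop]
    by_cases hk : k < w.length
    · exact (ha1occ k hk).symm
    · rw [List.getElem?_eq_none (l := w) (by omega),
        List.getElem?_eq_none (by rw [hylen]; omega)]
  have hwne : w ≠ x.take i := by
    intro he
    have := congrArg List.length he
    rw [hylen] at this
    omega
  have hmb : w.length ≤ u.length := humax w ⟨hwne, hwpre, hwsuf⟩
  -- c := u'.length ≤ i - 2
  have hcle : u'.length ≤ i - 2 := by
    have hle : u'.length ≤ i - 1 := by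
      have := hub'.2.1.length_le
      rwa [h2len] at this
    rcases Nat.lt_or_ge u'.length (i - 1) with hlt | hge
    · omega
    · exfalso
      have hpe := List.prefix_iff_eq_take.mp hub'.2.1
      have heq : u'.length = (x.take (i - 1)).length := by omega
      rw [heq, List.take_length] at hpe
      exact hub'.1 hpe
  -- F1 : the shift s' = i - 1 - c is a "period" below c
  have hupre := List.prefix_iff_eq_take.mp hub'.2.1
  have husuf := List.suffix_iff_eq_drop.mp hub'.2.2
  rw [h2len] at husuf
  have hF1 : ∀ k, k < u'.length →
      (x.take i)[k]? = (x.take i)[(i - 1 - u'.length) + k]? := by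
    intro k hk
    have e1 : u'[k]? = (x.take (i - 1))[k]? := by
      rw [hupre, List.getElem?_take, if_pos hk]
    have e2 : u'[k]? = (x.take (i - 1))[(i - 1 - u'.length) + k]? := by
      conv_lhs => rw [husuf]
      rw [List.getElem?_drop]
    have e3 : ∀ j, j < i - 1 → (x.take (i - 1))[j]? = (x.take i)[j]? := by
      intro j hj
      rw [List.getElem?_take, if_pos hj, List.getElem?_take, if_pos (by omega)]
    rw [e3 k (by omega)] at e1
    rw [e3 _ (by omega)] at e2
    rw [← e1, e2]
  -- main combinatorial step
  have hmc : w.length ≤ u'.length := by omega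
  have hnear : ∀ k, k + 1 < w.length →
      (x.take i)[(u'.length + 1 - w.length) + k]? = w[k]? := by
    intro k hk
    have e1 := hF1 ((u'.length + 1 - w.length) + k) (by omega)
    have e2 : (i - 1 - u'.length) + ((u'.length + 1 - w.length) + k)
        = (i - w.length) + k := by omega
    rw [e2] at e1
    rw [e1]
    exact ha1occ k (by omega)
  have hkey := coverExtend (fun j => (x.take i)[j]?) (fun k => w[k]?) i w.length
    (u'.length + 1 - w.length) hm1 hOcc (by omega) hnear
  have ec : (u'.length + 1 - w.length) + (w.length - 1) = u'.length := by omega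
  rw [ec] at hkey
  have hlast := ha1occ (w.length - 1) (by omega)
  have el : (i - w.length) + (w.length - 1) = i - 1 := by omega
  rw [el] at hlast
  have hci : (x.take i)[u'.length]? = (x.take i)[i - 1]? := by
    rw [hkey, ← hlast]
  -- the border of length c+1 of x.take i
  have hveq : (x.take i).take (u'.length + 1) = (x.take i).drop (i - 1 - u'.length) := by
    apply List.ext_getElem?
    intro k
    rw [List.getElem?_drop]
    rcases Nat.lt_trichotomy k u'.length with hk | hk | hk
    · rw [List.getElem?_take, if_pos (by omega)]
      exact hF1 k hk
    · subst hk
      rw [List.getElem?_take, if_pos (by omega)]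
      have e : (i - 1 - u'.length) + u'.length = i - 1 := by omega
      rw [e]
      exact hci
    · rw [List.getElem?_take, if_neg (by omega),
        List.getElem?_eq_none (by rw [hylen]; omega)]
  have hvne : (x.take i).take (u'.length + 1) ≠ x.take i := by
    intro he
    have := congrArg List.length he
    rw [List.length_take, hylen] at this
    omega
  have hvb : IsBorder ((x.take i).take (u'.length + 1)) (x.take i) :=
    ⟨hvne, List.take_prefix _ _, hveq ▸ List.drop_suffix _ _⟩
  have := humax _ hvb
  rw [List.length_take, hylen] at this
  omega
end

section
/- Let x be a coverable string and let w be its shortest cover (a cover of minimum length). Then w is superprimitive, i.e., w has no cover. Equivalently, if C is the minimal cover array of a string x of length n and C[i] ≠ 0 for some 1 ≤ i ≤ n, then C[C[i]] = 0. -/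
lemma cover_pos {α : Type*} {w x : List α} (h : IsCover w x) : 0 < w.length := by
  obtain ⟨hlt, P, hb, _, hcov⟩ := h
  by_contra hm
  have hm0 : w.length = 0 := by omega
  have h1 : (1:ℕ) ∈ Finset.Icc 1 x.length := Finset.mem_Icc.mpr ⟨le_refl _, by omega⟩
  rw [← hcov] at h1
  obtain ⟨p, hp, hmem⟩ := Finset.mem_biUnion.mp h1
  have hb' := hb p hp
  rw [Finset.mem_Icc] at hmem
  omega

lemma cover_prefix {α : Type*} {w x : List α} (h : IsCover w x) : x.take w.length = w := by
  obtain ⟨hlt, P, hb, hocc, hcov⟩ := h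
  have h1 : (1:ℕ) ∈ Finset.Icc 1 x.length := Finset.mem_Icc.mpr ⟨le_refl _, by omega⟩
  rw [← hcov] at h1
  obtain ⟨p, hp, hmem⟩ := Finset.mem_biUnion.mp h1
  have hb' := hb p hp
  rw [Finset.mem_Icc] at hmem
  have hp1 : p = 1 := by omega
  have := hocc p hp
  rw [hp1] at this
  simpa using this

lemma cover_trans {α : Type*} {u w x : List α} (huw : IsCover u w) (hwx : IsCover w x) :
    IsCover u x := by
  obtain ⟨hm, Q, hQb, hQocc, hQcov⟩ := huw
  obtain ⟨hk, P, hPb, hPocc, hPcov⟩ := hwx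
  refine ⟨hm.trans hk, (P ×ˢ Q).image (fun pq => pq.1 + pq.2 - 1), ?_, ?_, ?_⟩
  · rintro r hr
    simp only [Finset.mem_image, Finset.mem_product] at hr
    obtain ⟨⟨p, q⟩, ⟨hp, hq⟩, rfl⟩ := hr
    have h1 := hPb p hp
    have h2 := hQb q hq
    constructor <;> omega
  · rintro r hr
    simp only [Finset.mem_image, Finset.mem_product] at hr
    obtain ⟨⟨p, q⟩, ⟨hp, hq⟩, rfl⟩ := hr
    have h1 := hPb p hp
    have h2 := hQb q hq
    have hocc := hPocc p hp
    have hocc2 := hQocc q hq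
    have hd : x.drop (p + q - 1 - 1) = (x.drop (p-1)).drop (q-1) := by
      rw [List.drop_drop]; congr 1; omega
    rw [hd]
    have h3 : (((x.drop (p-1)).take w.length).drop (q-1)).take u.length
        = ((x.drop (p-1)).drop (q-1)).take u.length := by
      rw [List.drop_take, List.take_take]
      congr 1
      omega
    rw [← h3, hocc, hocc2]
  · ext t
    simp only [Finset.mem_biUnion, Finset.mem_image, Finset.mem_product, Finset.mem_Icc]
    constructor
    · rintro ⟨r, ⟨⟨p, q⟩, ⟨hp, hq⟩, rfl⟩, ht⟩
      have h1 := hPb p hp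
      have h2 := hQb q hq
      omega
    · intro ht
      have ht' : t ∈ Finset.Icc 1 x.length := Finset.mem_Icc.mpr ht
      rw [← hPcov] at ht'
      obtain ⟨p, hp, htp⟩ := Finset.mem_biUnion.mp ht'
      have h1 := hPb p hp
      rw [Finset.mem_Icc] at htp
      have ht2 : t - p + 1 ∈ Finset.Icc 1 w.length := Finset.mem_Icc.mpr (by omega)
      rw [← hQcov] at ht2
      obtain ⟨q, hq, htq⟩ := Finset.mem_biUnion.mp ht2
      have h2 := hQb q hq
      rw [Finset.mem_Icc] at htq
      exact ⟨p + q - 1, ⟨⟨p, q⟩, ⟨hp, hq⟩, rfl⟩, by omega⟩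

/-- The shortest cover of a coverable string is superprimitive;
equivalently, if `C` is a minimal cover array and `C i ≠ 0`, then `C (C i) = 0`. -/
theorem shortest_cover_superprimitive (α : Type*) :
    (∀ x w : List α, IsCover w x →
      (∀ v : List α, IsCover v x → w.length ≤ v.length) →
      ∀ u : List α, ¬ IsCover u w) ∧
    (∀ (x : List α) (C : ℕ → ℕ), IsMinCoverArray x C →
      ∀ i, 1 ≤ i → i ≤ x.length → C i ≠ 0 → C (C i) = 0) := by
  constructor
  · intro x w hwx hmin u hu
    have h := hmin u (cover_trans hu hwx)
    have := hu.1
    omega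
  · intro x C hC i h1 hi hCi
    rcases hC i h1 hi with ⟨_, h0⟩ | ⟨w, hw, hCeq, hmin⟩
    · exact absurd h0 hCi
    have hpos : 0 < w.length := cover_pos hw
    have hlen : (x.take i).length = i := by
      simp [List.length_take]; omega
    have hwlt : w.length < i := by
      have := hw.1; omega
    have hpre : x.take w.length = w := by
      have h2 := cover_prefix hw
      rwa [List.take_take, min_eq_left (by omega)] at h2
    rw [hCeq]
    rcases hC w.length hpos (by omega) with ⟨_, h0⟩ | ⟨v, hv, _, _⟩
    · exact h0
    · exfalso
      rw [hpre] at hv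
      have hge := hmin v (cover_trans hv hw)
      have := hv.1
      omega
end

section
/- Let x be a string and let w be a cover of x such that w is superprimitive. Then w is the shortest cover of x, i.e., every cover v of x satisfies |v| ≥ |w|. -/
lemma cover_facts {α : Type*} {v x : List α} (hv : IsCover v x) :
    1 ≤ v.length ∧ x.take v.length = v ∧
      (x.drop (x.length - v.length)).take v.length = v := by
  obtain ⟨hlt, Q, hQ1, hQ2, hQ3⟩ := hv
  set k := v.length
  set n := x.length
  have hn : 1 ≤ n := by omega
  -- position 1
  have h1 : (1 : ℕ) ∈ Finset.Icc 1 n := by simp [Finset.mem_Icc]; omega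
  rw [← hQ3] at h1
  obtain ⟨q1, hq1Q, hq1⟩ := Finset.mem_biUnion.mp h1
  rw [Finset.mem_Icc] at hq1
  have hb1 := hQ1 q1 hq1Q
  have hk1 : 1 ≤ k := by omega
  have hq1e : q1 = 1 := by omega
  have hpre := hQ2 q1 hq1Q
  rw [hq1e] at hpre
  simp at hpre
  -- position n
  have h2 : n ∈ Finset.Icc 1 n := by simp [Finset.mem_Icc]; omega
  rw [← hQ3] at h2
  obtain ⟨q2, hq2Q, hq2⟩ := Finset.mem_biUnion.mp h2
  rw [Finset.mem_Icc] at hq2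
  have hb2 := hQ1 q2 hq2Q
  have hq2e : q2 = n - k + 1 := by omega
  have hsuf := hQ2 q2 hq2Q
  rw [hq2e] at hsuf
  have : n - k + 1 - 1 = n - k := by omega
  rw [this] at hsuf
  exact ⟨hk1, hpre, hsuf⟩

lemma cover_trans_short {α : Type*} {x w v : List α} (hw : IsCover w x)
    (hv : IsCover v x) (h : v.length < w.length) : IsCover v w := by
  obtain ⟨hm1, hwpre, hwsuf⟩ := cover_facts hw
  obtain ⟨hk1, hvpre, hvsuf⟩ := cover_facts hv
  obtain ⟨hmn, _⟩ := hw
  obtain ⟨hkn, Q, hQ1, hQ2, hQ3⟩ := hv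
  set k := v.length with hkdef
  set m := w.length with hmdef
  set n := x.length with hndef
  -- v is a suffix of w
  have hvsw : (w.drop (m - k)).take k = v := by
    rw [← hwsuf, List.drop_take, List.take_take, List.drop_drop]
    have e1 : (n - m) + (m - k) = n - k := by omega
    have e2 : k ⊓ (m - (m - k)) = k := by
      have : m - (m - k) = k := by omega
      rw [this]; simp
    rw [e1, e2, hvsuf]
  refine ⟨h, insert (m - k + 1) (Q.filter fun q => q + k ≤ m + 1), ?_, ?_, ?_⟩
  · intro i hi
    rcases Finset.mem_insert.mp hi with rfl | hi
    · omega
    · rw [Finset.mem_filter] at hi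
      have := hQ1 i hi.1
      omega
  · intro i hi
    rcases Finset.mem_insert.mp hi with rfl | hi
    · have : m - k + 1 - 1 = m - k := by omega
      rw [this, hvsw]
    · rw [Finset.mem_filter] at hi
      have hb := hQ1 i hi.1
      rw [← hwpre, List.drop_take, List.take_take]
      have : k ⊓ (m - (i - 1)) = k := by omega
      rw [this]
      exact hQ2 i hi.1
  · ext t
    simp only [Finset.mem_biUnion, Finset.mem_Icc, Finset.mem_insert, Finset.mem_filter]
    constructor
    · rintro ⟨i, hi, hti⟩
      rcases hi with rfl | ⟨hiQ, hik⟩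
      · omega
      · have := hQ1 i hiQ
        omega
    · rintro ⟨ht1, htm⟩
      have : t ∈ Finset.Icc 1 n := Finset.mem_Icc.mpr ⟨ht1, by omega⟩
      rw [← hQ3] at this
      obtain ⟨q, hqQ, hq⟩ := Finset.mem_biUnion.mp this
      rw [Finset.mem_Icc] at hq
      have hb := hQ1 q hqQ
      by_cases hc : q + k ≤ m + 1
      · exact ⟨q, Or.inr ⟨hqQ, hc⟩, hq⟩
      · exact ⟨m - k + 1, Or.inl rfl, by omega⟩


/-- A superprimitive cover of `x` is the shortest cover of `x`. -/
theorem superprimitive_cover_is_shortest {α : Type*} (x w : List α)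
    (hw : IsCover w x) (hsp : ∀ u : List α, ¬ IsCover u w) :
    ∀ v : List α, IsCover v x → w.length ≤ v.length := by
  intro v hv
  by_contra hlt
  push_neg at hlt
  exact hsp v (cover_trans_short hw hv hlt)
end

section
/- Let x be a string of length n with minimal cover array C and maximal cover array C^M. Then for every position i with 1 ≤ i ≤ n: if C^M[i] = 0 then C[i] = 0; if C^M[i] ≠ 0 and C[C^M[i]] ≠ 0 then C[i] = C[C^M[i]]; and if C^M[i] ≠ 0 and C[C^M[i]] = 0 then C[i] = C^M[i]. -/
section CoverLemmas
variable {α : Type*} {u w x : List α}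

lemma cover_len_pos (h : IsCover w x) : 1 ≤ w.length := by
  obtain ⟨hlt, P, hP1, hP2, hP3⟩ := h
  by_contra hw
  have h1 : (1:ℕ) ∈ Finset.Icc 1 x.length := Finset.mem_Icc.mpr ⟨le_refl _, by omega⟩
  rw [← hP3] at h1
  obtain ⟨p, hp, hmem⟩ := Finset.mem_biUnion.mp h1
  have := hP1 p hp
  rw [Finset.mem_Icc] at hmem
  omega

lemma cover_take_eq (h : IsCover w x) : x.take w.length = w := by
  have hpos := cover_len_pos h
  obtain ⟨hlt, P, hP1, hP2, hP3⟩ := h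
  have h1 : (1:ℕ) ∈ Finset.Icc 1 x.length := Finset.mem_Icc.mpr ⟨le_refl _, by omega⟩
  rw [← hP3] at h1
  obtain ⟨p, hp, hmem⟩ := Finset.mem_biUnion.mp h1
  have hb := hP1 p hp
  rw [Finset.mem_Icc] at hmem
  have hp1 : p = 1 := by omega
  have := hP2 p hp
  rw [hp1] at this
  simpa using this

lemma cover_drop_eq (h : IsCover w x) : x.drop (x.length - w.length) = w := by
  have hpos := cover_len_pos h
  obtain ⟨hlt, P, hP1, hP2, hP3⟩ := h
  have h1 : x.length ∈ Finset.Icc 1 x.length := Finset.mem_Icc.mpr ⟨by omega, le_refl _⟩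
  rw [← hP3] at h1
  obtain ⟨p, hp, hmem⟩ := Finset.mem_biUnion.mp h1
  have hb := hP1 p hp
  rw [Finset.mem_Icc] at hmem
  have hp1 : p - 1 = x.length - w.length := by omega
  have he := hP2 p hp
  rw [hp1] at he
  have hlen : (x.drop (x.length - w.length)).length ≤ w.length := by
    rw [List.length_drop]; omega
  rw [List.take_of_length_le hlen] at he
  exact he

lemma cover_trans_s10 (hu : IsCover u w) (hw : IsCover w x) : IsCover u x := by
  have hu1 := cover_len_pos hu
  obtain ⟨hlt1, Q, hQ1, hQ2, hQ3⟩ := hu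
  obtain ⟨hlt2, P, hP1, hP2, hP3⟩ := hw
  refine ⟨hlt1.trans hlt2, P.biUnion (fun p => Q.image (fun q => p + q - 1)), ?_, ?_, ?_⟩
  · intro i hi
    obtain ⟨p, hp, hi⟩ := Finset.mem_biUnion.mp hi
    obtain ⟨q, hq, rfl⟩ := Finset.mem_image.mp hi
    have h1 := hP1 p hp; have h2 := hQ1 q hq
    omega
  · intro i hi
    obtain ⟨p, hp, hi⟩ := Finset.mem_biUnion.mp hi
    obtain ⟨q, hq, rfl⟩ := Finset.mem_image.mp hi
    have h1 := hP1 p hp; have h2 := hQ1 q hq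
    have e1 := hP2 p hp
    have e2 := hQ2 q hq
    rw [← e1, List.drop_take, List.take_take, List.drop_drop] at e2
    have hmin : u.length ⊓ (w.length - (q - 1)) = u.length := min_eq_left (by omega)
    rw [hmin] at e2
    have harith : p + q - 1 - 1 = p - 1 + (q - 1) := by omega
    rw [harith]
    exact e2
  · ext j
    simp only [Finset.mem_biUnion, Finset.mem_image, Finset.mem_Icc]
    constructor
    · rintro ⟨i, ⟨p, hp, q, hq, rfl⟩, hj1, hj2⟩
      have h1 := hP1 p hp; have h2 := hQ1 q hq
      omega
    · rintro ⟨hj1, hj2⟩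
      have hjx : j ∈ Finset.Icc 1 x.length := Finset.mem_Icc.mpr ⟨hj1, hj2⟩
      rw [← hP3] at hjx
      obtain ⟨p, hp, hjp⟩ := Finset.mem_biUnion.mp hjx
      rw [Finset.mem_Icc] at hjp
      have h1 := hP1 p hp
      have hjw : j - p + 1 ∈ Finset.Icc 1 w.length := Finset.mem_Icc.mpr ⟨by omega, by omega⟩
      rw [← hQ3] at hjw
      obtain ⟨q, hq, hjq⟩ := Finset.mem_biUnion.mp hjw
      rw [Finset.mem_Icc] at hjq
      have h2 := hQ1 q hq
      exact ⟨p + q - 1, ⟨p, hp, q, hq, rfl⟩, by omega, by omega⟩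

lemma cover_of_cover_lt (hu : IsCover u x) (hw : IsCover w x) (hlen : u.length < w.length) :
    IsCover u w := by
  have hu1 := cover_len_pos hu
  have hwpre := cover_take_eq hw
  have hwsuf := cover_drop_eq hw
  have husuf := cover_drop_eq hu
  have hupre := cover_take_eq hu
  have hltw : w.length < x.length := hw.1
  obtain ⟨hltu, P, hP1, hP2, hP3⟩ := hu
  refine ⟨hlen, (P.filter (fun p => p + u.length - 1 ≤ w.length)) ∪ {1, w.length - u.length + 1},
    ?_, ?_, ?_⟩
  · intro i hi
    rw [Finset.mem_union, Finset.mem_filter, Finset.mem_insert, Finset.mem_singleton] at hi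
    rcases hi with ⟨hp, hc⟩ | h1 | h2
    · have := hP1 i hp; omega
    · omega
    · omega
  · intro i hi
    rw [Finset.mem_union, Finset.mem_filter, Finset.mem_insert, Finset.mem_singleton] at hi
    rcases hi with ⟨hp, hc⟩ | rfl | rfl
    · have hb := hP1 i hp
      have he := hP2 i hp
      rw [← hwpre, List.drop_take, List.take_take]
      have hmin : u.length ⊓ (w.length - (i - 1)) = u.length := min_eq_left (by omega)
      rw [hmin]
      exact he
    · simp only [Nat.sub_self, List.drop_zero]
      rw [← hwpre, List.take_take]
      have hmin : u.length ⊓ w.length = u.length := min_eq_left (by omega)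
      rw [hmin]
      exact hupre
    · have harith : w.length - u.length + 1 - 1 = w.length - u.length := by omega
      have key : w.drop (w.length - u.length) = u := by
        have h' : w.drop (w.length - u.length)
            = (x.drop (x.length - w.length)).drop (w.length - u.length) := by rw [hwsuf]
        have harith2 : x.length - w.length + (w.length - u.length) = x.length - u.length := by
          omega
        rw [h', List.drop_drop, harith2, husuf]
      rw [harith, key]
      exact List.take_of_length_le (le_refl _)
  · ext j
    simp only [Finset.mem_biUnion, Finset.mem_union, Finset.mem_filter, Finset.mem_insert,
      Finset.mem_singleton, Finset.mem_Icc]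
    constructor
    · rintro ⟨i, (⟨hp, hc⟩ | rfl | rfl), hj1, hj2⟩
      · have := hP1 i hp; omega
      · omega
      · omega
    · rintro ⟨hj1, hj2⟩
      by_cases hsmall : j ≤ u.length
      · exact ⟨1, Or.inr (Or.inl rfl), by omega, by omega⟩
      by_cases hbig : w.length - u.length + 1 ≤ j
      · exact ⟨w.length - u.length + 1, Or.inr (Or.inr rfl), by omega, by omega⟩
      · have hjx : j ∈ Finset.Icc 1 x.length := Finset.mem_Icc.mpr ⟨hj1, by omega⟩
        rw [← hP3] at hjx
        obtain ⟨p, hp, hjp⟩ := Finset.mem_biUnion.mp hjx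
        rw [Finset.mem_Icc] at hjp
        have hb := hP1 p hp
        exact ⟨p, Or.inl ⟨hp, by omega⟩, by omega, by omega⟩

end CoverLemmas

/-- Relation between the minimal and maximal cover arrays:
`C^M i = 0 → C i = 0`; if `C^M i ≠ 0` and `C (C^M i) ≠ 0` then `C i = C (C^M i)`;
and if `C^M i ≠ 0` and `C (C^M i) = 0` then `C i = C^M i`. -/
theorem min_of_max_coverArray {α : Type*} (x : List α) (C CM : ℕ → ℕ)
    (hC : IsMinCoverArray x C) (hCM : IsMaxCoverArray x CM) :
    ∀ i, 1 ≤ i → i ≤ x.length →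
      (CM i = 0 → C i = 0) ∧
      (CM i ≠ 0 → C (CM i) ≠ 0 → C i = C (CM i)) ∧
      (CM i ≠ 0 → C (CM i) = 0 → C i = CM i) := by
  intro i hi1 hi2
  rcases hCM i hi1 hi2 with ⟨hno, hcm0⟩ | ⟨w, hw, hcmw, hwmax⟩
  · refine ⟨fun _ => ?_, fun h => absurd hcm0 h, fun h => absurd hcm0 h⟩
    rcases hC i hi1 hi2 with ⟨_, h0⟩ | ⟨v, hv, _, _⟩
    · exact h0
    · exact absurd hv (hno v)
  · have hw1 : 1 ≤ w.length := cover_len_pos hw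
    have hxi : (x.take i).length = i := by rw [List.length_take]; omega
    have hwlt : w.length < i := by have := hw.1; omega
    have hCMne : CM i ≠ 0 := by omega
    have hwtake : x.take (CM i) = w := by
      have h := cover_take_eq hw
      rw [List.take_take, min_eq_left (by omega : w.length ≤ i)] at h
      rw [hcmw]; exact h
    have hcm1 : 1 ≤ CM i := by omega
    have hcm2 : CM i ≤ x.length := by omega
    rcases hC (CM i) hcm1 hcm2 with ⟨hnoc, hc0⟩ | ⟨u, hu, hcu, humin⟩
    · -- no cover of w : C i = CM i
      have hwmin : ∀ v : List α, IsCover v (x.take i) → w.length ≤ v.length := by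
        intro v hv
        have hvle := hwmax v hv
        rcases lt_or_eq_of_le hvle with hlt | heq
        · exact absurd (by rw [hwtake]; exact cover_of_cover_lt hv hw hlt) (hnoc v)
        · omega
      refine ⟨fun h => absurd h hCMne, fun _ hne => absurd hc0 hne, fun _ _ => ?_⟩
      rcases hC i hi1 hi2 with ⟨hnone, _⟩ | ⟨u', hu', hci, hu'min⟩
      · exact absurd hw (hnone w)
      · have h1 := hu'min w hw
        have h2 := hwmin u' hu'
        omega
    · -- u shortest cover of w ; C i = C (CM i)
      have huw : IsCover u w := by rw [← hwtake]; exact hu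
      have hucov : IsCover u (x.take i) := cover_trans_s10 huw hw
      have hulen : u.length < w.length := by have := huw.1; exact this
      have humin' : ∀ v : List α, IsCover v (x.take i) → u.length ≤ v.length := by
        intro v hv
        have hvle := hwmax v hv
        rcases lt_or_eq_of_le hvle with hlt | heq
        · have : IsCover v w := cover_of_cover_lt hv hw hlt
          exact humin v (by rw [hwtake]; exact this)
        · omega
      have hu1 : 1 ≤ u.length := cover_len_pos hu
      refine ⟨fun h => absurd h hCMne, fun _ _ => ?_, fun _ h0 => absurd h0 (by omega)⟩
      rcases hC i hi1 hi2 with ⟨hnone, _⟩ | ⟨u', hu', hci, hu'min⟩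
      · exact absurd hw (hnone w)
      · have h1 := hu'min u hucov
        have h2 := humin' u' hu'
        omega
end

section
/- Let x be a string of length n with border array B, and let i be a position with 2 ≤ i ≤ n. Set k = B[i−1]. If x[i] ≠ x[k+1], then B[i] ≤ k, i.e., B[i] ≤ B[i−1]. -/
/-- With `k = B (i−1)`, if `x[i] ≠ x[k+1]` (1-based) then `B i ≤ B (i−1)`. -/
theorem borderArray_le_of_mismatch {α : Type*} (x : List α) (B : ℕ → ℕ)
    (hB : IsBorderArray x B) (i : ℕ) (hi1 : 2 ≤ i) (hi2 : i ≤ x.length)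
    (hne : x[i - 1]? ≠ x[B (i - 1)]?) :
    B i ≤ B (i - 1) := by
  obtain ⟨u, ⟨hune, hupre, husuf⟩, hBi, humax⟩ := hB i (by omega) hi2
  obtain ⟨v, hv, hBi1, hvmax⟩ := hB (i-1) (by omega) (by omega)
  rw [hBi, hBi1]
  by_contra hlt
  push_neg at hlt
  set m := u.length with hm
  have hti : (x.take i).length = i := by simp; omega
  have hmi : m < i := by
    have := hupre.length_le
    rcases lt_or_eq_of_le (hti ▸ this) with h | h
    · exact h
    · exact absurd (hupre.eq_of_length (by omega)) hune
  have hm1 : 1 ≤ m := by omega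
  -- u prefix of x
  have hux : u <+: x := hupre.trans (List.take_prefix i x)
  have hueq : u = x.take m := List.prefix_iff_eq_take.mp hux
  -- suffix decomposition
  obtain ⟨w, hw⟩ := husuf
  have hwl : w.length + m = i := by
    have := congrArg List.length hw
    simpa [hti] using this
  -- u.dropLast is a border of x.take (i-1)
  have hdl : u.dropLast = u.take (m-1) := by
    rw [List.dropLast_eq_take]
  have hdpre : u.take (m-1) <+: x.take (i-1) := by
    rw [List.prefix_take_iff]
    constructor
    · exact (List.take_prefix _ u).trans hux
    · simp; omega
  have hdsuf : u.take (m-1) <:+ x.take (i-1) := by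
    refine ⟨w, ?_⟩
    have : x.take (i-1) = (x.take i).take (i-1) := by rw [List.take_take]; congr 1; omega
    rw [this, ← hw]
    rw [show i - 1 = w.length + (m-1) by omega, List.take_append]
    rw [List.take_of_length_le (Nat.le_add_right _ _), Nat.add_sub_cancel_left]
  have hdne : u.take (m-1) ≠ x.take (i-1) := by
    intro h
    have := congrArg List.length h
    simp at this
    omega
  have hle := hvmax _ ⟨hdne, hdpre, hdsuf⟩
  have hmlen : m = v.length + 1 := by
    simp at hle
    omega
  -- character contradiction
  apply hne
  rw [hBi1, show v.length = m - 1 by omega]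
  have h1 : x[i-1]? = u[m-1]? := by
    have : x[i-1]? = (x.take i)[i-1]? := by
      rw [List.getElem?_take_of_lt (by omega)]
    rw [this, ← hw, show i - 1 = w.length + (m-1) by omega,
      List.getElem?_append_right (by omega)]
    congr 1
    omega
  have h2 : u[m-1]? = x[m-1]? := by
    rw [hueq, List.getElem?_take_of_lt (by omega)]
  rw [h1, h2]
end

section
/- Let x be a string of length n with minimal cover array C, and let C^P be the pruned minimal cover array obtained from C. Then the equivalence relation on positions {1,…,n} generated by the relation R_{C^P} equals the equivalence relation generated by the relation R_C; that is, pruning does not change the connected components of the cover graph. -/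
namespace PruneAux

variable {α : Type*}

/-- occurrence of the prefix of length `m` at 0-based offset `a` in `x`. -/
def Occ (x : List α) (a m : ℕ) : Prop := ∀ q < m, x[a + q]? = x[q]?

/-- the prefix of length `m` covers the prefix of length `k` (element form). -/
def Cov (x : List α) (m k : ℕ) : Prop :=
  1 ≤ m ∧ m < k ∧ k ≤ x.length ∧
  ∃ P : Finset ℕ,
    (∀ s ∈ P, 1 ≤ s ∧ s + m ≤ k + 1) ∧
    (∀ s ∈ P, Occ x (s - 1) m) ∧
    (P.biUnion fun s => Finset.Icc s (s + m - 1)) = Finset.Icc 1 k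

lemma occ_iff_list (x : List α) (a m : ℕ) (h : a + m ≤ x.length) :
    (x.drop a).take m = x.take m ↔ Occ x a m := by
  constructor
  · intro he q hq
    have h1 : ((x.drop a).take m)[q]? = ((x.take m))[q]? := by rw [he]
    rw [List.getElem?_take, List.getElem?_take, List.getElem?_drop] at h1
    simpa [hq] using h1
  · intro ho
    apply List.ext_getElem?
    intro q
    rw [List.getElem?_take, List.getElem?_take, List.getElem?_drop]
    by_cases hq : q < m
    · simp only [hq, if_pos]
      exact ho q hq
    · simp [hq]

lemma take_drop_take (x : List α) (a m k : ℕ) (h : a + m ≤ k) :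
    ((x.take k).drop a).take m = (x.drop a).take m := by
  rw [List.drop_take, List.take_take]
  congr 1
  omega

lemma cov_of_isCover {x w : List α} {k : ℕ} (hk1 : 1 ≤ k) (hk2 : k ≤ x.length)
    (h : IsCover w (x.take k)) : Cov x w.length k := by
  obtain ⟨hlen, P, hbd, hocc, hcov⟩ := h
  have hyl : (x.take k).length = k := by rw [List.length_take]; omega
  rw [hyl] at hlen hbd hcov
  set m := w.length with hm
  -- position 1 is covered, so 1 ∈ some block, giving s = 1 ∈ P and m ≥ 1
  have h1k : (1:ℕ) ∈ Finset.Icc 1 k := by simp [Finset.mem_Icc]; omega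
  rw [← hcov] at h1k
  obtain ⟨s, hsP, hs⟩ := Finset.mem_biUnion.mp h1k
  simp only [Finset.mem_Icc] at hs
  have hsb := hbd s hsP
  have hs1 : s = 1 := by omega
  have hm1 : 1 ≤ m := by omega
  subst hs1
  have hw : w = x.take m := by
    have := hocc 1 hsP
    simp only [Nat.sub_self, List.drop_zero] at this
    rw [List.take_take] at this
    rw [← this]
    congr 1
    omega
  refine ⟨hm1, hlen, hk2, P, ?_, ?_, ?_⟩
  · intro s hsP'
    have := hbd s hsP'
    omega
  · intro s hsP'
    have h2 := hocc s hsP'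
    have hb := hbd s hsP'
    rw [take_drop_take x (s-1) m k (by omega), hw] at h2
    exact (occ_iff_list x (s-1) m (by omega)).mp h2
  · exact hcov

lemma isCover_of_cov {x : List α} {m k : ℕ} (h : Cov x m k) :
    IsCover (x.take m) (x.take k) := by
  obtain ⟨hm1, hmk, hkn, P, hbd, hocc, hcov⟩ := h
  have hyl : (x.take k).length = k := by rw [List.length_take]; omega
  have hwl : (x.take m).length = m := by rw [List.length_take]; omega
  refine ⟨by rw [hyl, hwl]; omega, P, ?_, ?_, ?_⟩
  · intro s hs
    have := hbd s hs
    rw [hyl, hwl]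
    omega
  · intro s hs
    have := hbd s hs
    rw [hwl, take_drop_take x (s-1) m k (by omega)]
    exact (occ_iff_list x (s-1) m (by omega)).mpr (hocc s hs)
  · rw [hyl, hwl]
    exact hcov

lemma cov_border {x : List α} {m k : ℕ} (h : Cov x m k) : Occ x (k - m) m := by
  obtain ⟨hm1, hmk, hkn, P, hbd, hocc, hcov⟩ := h
  have hk : k ∈ Finset.Icc 1 k := by simp [Finset.mem_Icc]; omega
  rw [← hcov] at hk
  obtain ⟨s, hsP, hs⟩ := Finset.mem_biUnion.mp hk
  simp only [Finset.mem_Icc] at hs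
  have hsb := hbd s hsP
  have : s - 1 = k - m := by omega
  exact this ▸ hocc s hsP

lemma cov_extend {x : List α} {m k δ : ℕ} (h : Cov x m k) (hδ : 1 ≤ δ)
    (hocc : Occ x δ m) (hle : δ + m ≤ k) : Cov x m (δ + m) := by
  classical
  obtain ⟨hm1, hmk, hkn, P, hbd, hoccP, hcov⟩ := h
  refine ⟨hm1, by omega, by omega,
    P.filter (fun s => s + m ≤ δ + m + 1) ∪ {δ + 1}, ?_, ?_, ?_⟩
  · intro s hs
    rcases Finset.mem_union.mp hs with hs | hs
    · have h2 := (Finset.mem_filter.mp hs).2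
      have := hbd _ (Finset.mem_filter.mp hs).1
      omega
    · have : s = δ + 1 := Finset.mem_singleton.mp hs
      omega
  · intro s hs
    rcases Finset.mem_union.mp hs with hs | hs
    · exact hoccP _ (Finset.mem_filter.mp hs).1
    · have hseq : s = δ + 1 := Finset.mem_singleton.mp hs
      subst hseq
      simpa using hocc
  · ext p
    simp only [Finset.mem_biUnion, Finset.mem_union, Finset.mem_filter,
      Finset.mem_singleton, Finset.mem_Icc]
    constructor
    · rintro ⟨s, hs | hs, hp1, hp2⟩
      · obtain ⟨hsP, hsbd⟩ := hs
        have := hbd s hsP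
        omega
      · omega
    · rintro ⟨hp1, hp2⟩
      by_cases hpd : δ + 1 ≤ p
      · exact ⟨δ + 1, Or.inr rfl, by omega, by omega⟩
      · have hpk : p ∈ Finset.Icc 1 k := by simp [Finset.mem_Icc]; omega
        rw [← hcov] at hpk
        obtain ⟨s, hsP, hp⟩ := Finset.mem_biUnion.mp hpk
        simp only [Finset.mem_Icc] at hp
        have hsb := hbd s hsP
        exact ⟨s, Or.inl ⟨hsP, by omega⟩, hp.1, hp.2⟩

lemma minCov {x : List α} {C : ℕ → ℕ} (hC : IsMinCoverArray x C) {m k : ℕ} (h : Cov x m k) :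
    Cov x (C k) k ∧ C k ≤ m := by
  have hk1 : 1 ≤ k := by
    obtain ⟨hm1, hmk, -⟩ := h
    omega
  have hkn : k ≤ x.length := h.2.2.1
  rcases hC k hk1 hkn with ⟨hno, -⟩ | ⟨w, hw, hlen, hmin⟩
  · exact absurd (isCover_of_cov h) (hno _)
  · have h1 := cov_of_isCover hk1 hkn hw
    have h2 := hmin _ (isCover_of_cov h)
    have hwl : (x.take m).length = m := by
      rw [List.length_take]
      obtain ⟨hm1, hmk, -⟩ := h
      omega
    rw [← hlen] at h1
    rw [hwl] at h2
    exact ⟨h1, by omega⟩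


lemma exists_unpruned {n : ℕ} {C : ℕ → ℕ} {k : ℕ} (h : TotallyCovered n C k) :
    ∃ i, k < i ∧ i ≤ n ∧ C i ≠ 0 ∧ i - C i + 1 ≤ k - C k + 1 ∧ ¬ TotallyCovered n C i := by
  obtain ⟨hk0, i0, hi1, hi2, hi3, hi4, -⟩ := h
  have aux : ∀ M i, n - i ≤ M → k < i → i ≤ n → C i ≠ 0 → i - C i + 1 ≤ k - C k + 1 →
      ∃ i', k < i' ∧ i' ≤ n ∧ C i' ≠ 0 ∧ i' - C i' + 1 ≤ k - C k + 1 ∧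
        ¬ TotallyCovered n C i' := by
    intro M
    induction M with
    | zero =>
      intro i hM h1 h2 h3 h4
      refine ⟨i, h1, h2, h3, h4, ?_⟩
      rintro ⟨-, i2, hi2a, hi2b, -⟩
      omega
    | succ M ih =>
      intro i hM h1 h2 h3 h4
      by_cases htc : TotallyCovered n C i
      · obtain ⟨-, i2, h21, h22, h23, h24, -⟩ := htc
        exact ih i2 (by omega) (by omega) h22 h23 (by omega)
      · exact ⟨i, h1, h2, h3, h4, htc⟩
  exact aux (n - i0) i0 le_rfl hi1 hi2 hi3 hi4

lemma edge_rel {n : ℕ} {γ : ℕ → ℕ} {i t : ℕ} (h1 : 1 ≤ i) (h2 : i ≤ n) (h3 : γ i ≠ 0)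
    (ht1 : 1 ≤ t) (ht2 : t ≤ γ i) : CoverRel n γ t (t + (i - γ i)) :=
  ⟨i, t, h1, h2, h3, ht1, ht2, by rw [Nat.add_comm (i - γ i) t]⟩

lemma main {x : List α} {C CP : ℕ → ℕ} (hC : IsMinCoverArray x C)
    (hP : IsPrunedCoverArray x.length C CP) :
    ∀ k m, Cov x m k → ∀ t, 1 ≤ t → t ≤ m →
      Relation.EqvGen (CoverRel x.length CP) t (t + (k - m)) := by
  intro k
  induction k using Nat.strong_induction_on with
  | _ k IH1 =>
  intro m
  induction m using Nat.strong_induction_on with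
  | _ m IH2 =>
  intro hcov t ht1 ht2
  obtain ⟨hm1, hmk, hkn, -⟩ := id hcov
  obtain ⟨hck, hcle⟩ := minCov hC hcov
  obtain ⟨hc1, hck2, -⟩ := id hck
  rcases eq_or_lt_of_le hcle with hEq | hlt
  · -- MINIMAL CASE : C k = m
    by_cases htc : TotallyCovered x.length C k
    · -- pruned position: use an unpruned covering witness i
      obtain ⟨i, hik, hin, hCi, hshift, hnotc⟩ := exists_unpruned htc
      have hCPi : CP i = C i := (hP i (by omega) hin).2 hnotc
      have hcovi : Cov x (C i) i := by
        rcases hC i (by omega) hin with ⟨-, h0⟩ | ⟨w, hw, hlen, -⟩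
        · exact absurd h0 hCi
        · have h1 := cov_of_isCover (show 1 ≤ i by omega) hin hw
          rwa [← hlen] at h1
      obtain ⟨hci1, hcii, -⟩ := id hcovi
      have hbord_i : Occ x (i - C i) (C i) := cov_border hcovi
      have hbord_k : Occ x (k - m) m := cov_border hcov
      by_cases hδ : k - m = i - C i
      · -- δ = 0 : single edge at i
        have ht2' : t ≤ CP i := by rw [hCPi]; omega
        have hrel := edge_rel (n := x.length) (γ := CP) (show 1 ≤ i by omega) hin
          (by rw [hCPi]; exact hCi) ht1 ht2'
        have e : t + (i - CP i) = t + (k - m) := by rw [hCPi]; omega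
        exact Relation.EqvGen.rel _ _ (e ▸ hrel)
      · -- δ ≥ 1
        have hD1 : 1 ≤ i - C i := by omega
        have hδ1 : 1 ≤ (k - m) - (i - C i) := by omega
        have hoccδ : Occ x ((k - m) - (i - C i)) m := by
          intro q hq
          have e1 : x[(i - C i) + (((k - m) - (i - C i)) + q)]? =
              x[((k - m) - (i - C i)) + q]? := hbord_i _ (by omega)
          have e2 : x[(k - m) + q]? = x[q]? := hbord_k q hq
          have e3 : (i - C i) + (((k - m) - (i - C i)) + q) = (k - m) + q := by omega
          rw [e3] at e1
          exact e1.symm.trans e2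
        have hcov2 : Cov x m (((k - m) - (i - C i)) + m) :=
          cov_extend hcov hδ1 hoccδ (by omega)
        have step1 := IH1 (((k - m) - (i - C i)) + m) (by omega) m hcov2 t ht1 ht2
        have e1 : t + ((((k - m) - (i - C i)) + m) - m) = t + ((k - m) - (i - C i)) := by
          omega
        rw [e1] at step1
        have step2 : CoverRel x.length CP (t + ((k - m) - (i - C i)))
            ((t + ((k - m) - (i - C i))) + (i - CP i)) :=
          edge_rel (show 1 ≤ i by omega) hin (by rw [hCPi]; exact hCi) (by omega)
            (by rw [hCPi]; omega)
        have e2 : (t + ((k - m) - (i - C i))) + (i - CP i) = t + (k - m) := by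
          rw [hCPi]; omega
        exact Relation.EqvGen.trans _ _ _ step1 (Relation.EqvGen.rel _ _ (e2 ▸ step2))
    · -- unpruned position: direct edge at k
      have hCPk : CP k = C k := (hP k (by omega) hkn).2 htc
      have hrel := edge_rel (n := x.length) (γ := CP) (show 1 ≤ k by omega) hkn
        (by rw [hCPk]; omega) ht1 (by rw [hCPk]; omega)
      have e : t + (k - CP k) = t + (k - m) := by rw [hCPk, hEq]
      exact Relation.EqvGen.rel _ _ (e ▸ hrel)
  · -- NON-MINIMAL CASE : C k < m
    have hbord_k : Occ x (k - m) m := cov_border hcov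
    have hbord_c : Occ x (k - C k) (C k) := cov_border hck
    have hoccw : Occ x (m - C k) (C k) := by
      intro q hq
      have e1 : x[(k - m) + ((m - C k) + q)]? = x[(m - C k) + q]? := hbord_k _ (by omega)
      have e2 : x[(k - C k) + q]? = x[q]? := hbord_c q hq
      have e3 : (k - m) + ((m - C k) + q) = (k - C k) + q := by omega
      rw [e3] at e1
      exact e1.symm.trans e2
    have hcovm : Cov x (C k) m := by
      have h' := cov_extend hck (by omega) hoccw (by omega)
      have e : (m - C k) + C k = m := by omega
      rwa [e] at h'
    obtain ⟨-, -, -, Pm, hbdm, hoccm, hcovPm⟩ := id hcovm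
    have htm : t ∈ Finset.Icc 1 m := by simp [Finset.mem_Icc]; omega
    rw [← hcovPm] at htm
    obtain ⟨s, hsP, hts⟩ := Finset.mem_biUnion.mp htm
    simp only [Finset.mem_Icc] at hts
    have hsb := hbdm s hsP
    have hoccs : Occ x (s - 1) (C k) := hoccm s hsP
    -- LEFT : (t - s + 1) ~ t
    have left : Relation.EqvGen (CoverRel x.length CP) (t - s + 1) t := by
      rcases Nat.eq_or_lt_of_le hsb.1 with h1 | h1
      · have e : t - s + 1 = t := by omega
        rw [e]
        exact Relation.EqvGen.refl t
      · have hcove : Cov x (C k) ((s - 1) + C k) :=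
          cov_extend hcovm (by omega) hoccs (by omega)
        have h' := IH1 ((s - 1) + C k) (by omega) (C k) hcove (t - s + 1)
          (by omega) (by omega)
        have e : (t - s + 1) + (((s - 1) + C k) - C k) = t := by omega
        rwa [e] at h'
    -- RIGHT : (t - s + 1) ~ t + (k - m)
    have right : Relation.EqvGen (CoverRel x.length CP) (t - s + 1) (t + (k - m)) := by
      by_cases hem : s + C k = m + 1
      · -- the occurrence is the suffix occurrence of w in the prefix m
        have h' := IH2 (C k) hlt hck (t - s + 1) (by omega) (by omega)
        have e : (t - s + 1) + (k - C k) = t + (k - m) := by omega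
        rwa [e] at h'
      · -- interior occurrence: transfer it to the suffix copy of the prefix m
        have hocc2 : Occ x ((k - m) + (s - 1)) (C k) := by
          intro q hq
          have e1 : x[(k - m) + ((s - 1) + q)]? = x[(s - 1) + q]? := hbord_k _ (by omega)
          have e2 := hoccs q hq
          have e3 : (k - m) + ((s - 1) + q) = ((k - m) + (s - 1)) + q := by omega
          rw [e3] at e1
          exact e1.trans e2
        have hcove2 : Cov x (C k) (((k - m) + (s - 1)) + C k) :=
          cov_extend hck (by omega) hocc2 (by omega)
        have h' := IH1 (((k - m) + (s - 1)) + C k) (by omega) (C k) hcove2 (t - s + 1)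
          (by omega) (by omega)
        have e : (t - s + 1) + ((((k - m) + (s - 1)) + C k) - C k) = t + (k - m) := by
          omega
        rwa [e] at h'
    exact Relation.EqvGen.trans _ _ _ (Relation.EqvGen.symm _ _ left) right

end PruneAux

/-- Pruning does not change the connected components of the cover graph:
the equivalence relations generated by `R_{C^P}` and by `R_C` coincide. -/
theorem pruning_preserves_components {α : Type*} (x : List α) (C CP : ℕ → ℕ)
    (hC : IsMinCoverArray x C) (hP : IsPrunedCoverArray x.length C CP) :
    Relation.EqvGen (CoverRel x.length CP) = Relation.EqvGen (CoverRel x.length C) := by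
  have lift : ∀ (r s : ℕ → ℕ → Prop), (∀ a b, r a b → Relation.EqvGen s a b) →
      ∀ a b, Relation.EqvGen r a b → Relation.EqvGen s a b := by
    intro r s h a b hab
    induction hab with
    | rel a b hr => exact h a b hr
    | refl a => exact Relation.EqvGen.refl a
    | symm a b _ ih => exact Relation.EqvGen.symm a b ih
    | trans a b c _ _ ih1 ih2 => exact Relation.EqvGen.trans a b c ih1 ih2
  funext p q
  apply propext
  constructor
  · apply lift
    rintro a b ⟨i, j, h1, h2, h3, h4, h5, h6⟩
    have hnt : ¬ TotallyCovered x.length C i := fun ht => h3 ((hP i h1 h2).1 ht)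
    have hCP : CP i = C i := (hP i h1 h2).2 hnt
    rw [hCP] at h3 h5 h6
    exact Relation.EqvGen.rel _ _ ⟨i, j, h1, h2, h3, h4, h5, h6⟩
  · apply lift
    rintro a b ⟨i, j, h1, h2, h3, h4, h5, h6⟩
    have hcovi : PruneAux.Cov x (C i) i := by
      rcases hC i h1 h2 with ⟨-, h0⟩ | ⟨w, hw, hlen, -⟩
      · exact absurd h0 h3
      · have h' := PruneAux.cov_of_isCover h1 h2 hw
        rwa [← hlen] at h'
    have hrel := PruneAux.main hC hP i (C i) hcovi j h4 h5
    have hmem_a : a ∈ ({j, i - C i + j} : Set ℕ) := by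
      rw [← h6]; exact Set.mem_insert _ _
    have hmem_b : b ∈ ({j, i - C i + j} : Set ℕ) := by
      rw [← h6]; exact Set.mem_insert_iff.mpr (Or.inr rfl)
    simp only [Set.mem_insert_iff, Set.mem_singleton_iff] at hmem_a hmem_b
    have e : i - C i + j = j + (i - C i) := Nat.add_comm _ _
    rcases hmem_a with ha | ha <;> rcases hmem_b with hb | hb <;> subst ha <;> subst hb
    · exact Relation.EqvGen.refl _
    · rw [e]; exact hrel
    · rw [e]; exact Relation.EqvGen.symm _ _ hrel
    · exact Relation.EqvGen.refl _
end

section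
/- Let x be a string of length n with minimal cover array C. If positions p and q in {1,…,n} are related by the equivalence relation generated by R_C (i.e., p and q lie in the same connected component of the cover graph of C), then x[p] = x[q]. -/
lemma coverRel_char_eq {α : Type*} (x : List α) (C : ℕ → ℕ)
    (hC : IsMinCoverArray x C) {p q : ℕ} (h : CoverRel x.length C p q) :
    x[p - 1]? = x[q - 1]? := by
  obtain ⟨i, j, hi1, hi2, hCi, hj1, hj2, hset⟩ := h
  rcases hC i hi1 hi2 with ⟨_, h0⟩ | ⟨w, hw, hlen, _⟩
  · exact absurd h0 hCi
  set m := w.length with hm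
  have hlentake : (x.take i).length = i := by
    simp [List.length_take, min_eq_left hi2]
  obtain ⟨hlt, P, hP1, hP2, hP3⟩ := hw
  rw [hlentake] at hlt hP1
  have hm1 : 1 ≤ m := by
    rcases Nat.eq_zero_or_pos m with h0 | h0
    · exact absurd (hlen.trans h0) hCi
    · exact h0
  -- occurrence at position 1
  have h1mem : (1 : ℕ) ∈ P.biUnion (fun i => Finset.Icc i (i + m - 1)) := by
    rw [hP3, hlentake]; exact Finset.mem_Icc.mpr ⟨le_refl 1, hi1⟩
  obtain ⟨a, haP, ha⟩ := Finset.mem_biUnion.mp h1mem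
  have ha1 : a = 1 := le_antisymm (Finset.mem_Icc.mp ha).1 (hP1 a haP).1
  have wpre : x.take m = w := by
    have := hP2 a haP
    rw [ha1] at this
    simpa [List.take_take, min_eq_left (le_of_lt hlt)] using this
  -- occurrence ending at i
  have himem : i ∈ P.biUnion (fun i => Finset.Icc i (i + m - 1)) := by
    rw [hP3, hlentake]; exact Finset.mem_Icc.mpr ⟨hi1, le_refl i⟩
  obtain ⟨b, hbP, hb⟩ := Finset.mem_biUnion.mp himem
  have hb2 := Finset.mem_Icc.mp hb
  have hble : b ≤ i - m + 1 := (hP1 b hbP).2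
  have hbge : i - m + 1 ≤ b := by omega
  have hbeq : b = i - m + 1 := le_antisymm hble hbge
  have wsuf : ((x.take i).drop (i - m)).take m = w := by
    have := hP2 b hbP
    rw [hbeq] at this
    simpa using this
  -- character equality
  have hjm : j ≤ m := by rw [← hlen]; exact hj2
  have e1 : x[j - 1]? = w[j - 1]? := by
    rw [← wpre]
    rw [List.getElem?_take_of_lt (by omega)]
  have e2 : w[j - 1]? = x[i - m + j - 1]? := by
    rw [← wsuf]
    rw [List.getElem?_take_of_lt (by omega), List.getElem?_drop,
      List.getElem?_take_of_lt (by omega)]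
    congr 1
    omega
  have e : x[j - 1]? = x[i - m + j - 1]? := e1.trans e2
  have hpm : p ∈ ({j, i - C i + j} : Set ℕ) := by
    rw [← hset]; left; rfl
  have hqm : q ∈ ({j, i - C i + j} : Set ℕ) := by
    rw [← hset]; right; rfl
  rw [hlen] at hpm hqm
  rcases hpm with hp | hp <;> rcases hqm with hq | hq <;>
    subst hp <;> subst hq
  · rfl
  · exact e
  · exact e.symm
  · rfl

/-- Positions in the same connected component of the cover graph of `C`
carry equal characters (1-based indexing). -/
theorem eq_char_of_coverRel {α : Type*} (x : List α) (C : ℕ → ℕ)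
    (hC : IsMinCoverArray x C) (p q : ℕ)
    (hp1 : 1 ≤ p) (hp2 : p ≤ x.length) (hq1 : 1 ≤ q) (hq2 : q ≤ x.length)
    (h : Relation.EqvGen (CoverRel x.length C) p q) :
    x[p - 1]? = x[q - 1]? := by
  clear hp1 hp2 hq1 hq2
  induction h with
  | rel a b hab => exact coverRel_char_eq x C hC hab
  | refl a => rfl
  | symm a b _ ih => exact ih.symm
  | trans a b c _ _ ih1 ih2 => exact ih1.trans ih2
end
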